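/- arXiv:1312.4895 — 3 statements merged into one kernel-verified Lean document; each statement's English description precedes it below -/
import Mathlib

section
/- (Exact recovery by Basis Pursuit.) Let A ∈ ℝ^{m×n} satisfy the restricted isometry property of order 2κ with constant δ_{2κ} < √2 − 1, and let x ∈ ℝ^n be κ-sparse. Then x is the unique minimizer of ‖z‖₁ over the set {z ∈ ℝ^n : Az = Ax}. -/
open Finset

/-- `x` is `κ`-sparse: at most `κ` nonzero entries. -/
def IsSparse {n : ℕ} (κ : ℕ) (x : Fin n → ℝ) : Prop :=
  (Finset.univ.filter fun j => x j ≠ 0).card ≤ κ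

/-- ℓ¹ norm. -/
noncomputable def norm1 {d : ℕ} (v : Fin d → ℝ) : ℝ := ∑ i, |v i|

namespace BPaux




noncomputable def sq2 {d : ℕ} (v : Fin d → ℝ) : ℝ := ∑ i, v i ^ 2
noncomputable def nrm {d : ℕ} (v : Fin d → ℝ) : ℝ := Real.sqrt (sq2 v)
noncomputable def ip {d : ℕ} (u v : Fin d → ℝ) : ℝ := ∑ i, u i * v i

lemma sq2_nonneg {d : ℕ} (v : Fin d → ℝ) : 0 ≤ sq2 v :=
  Finset.sum_nonneg fun i _ => sq_nonneg _

lemma nrm_nonneg {d : ℕ} (v : Fin d → ℝ) : 0 ≤ nrm v := Real.sqrt_nonneg _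

lemma nrm_sq {d : ℕ} (v : Fin d → ℝ) : nrm v ^ 2 = sq2 v :=
  Real.sq_sqrt (sq2_nonneg v)

lemma sq2_eq_zero {d : ℕ} {v : Fin d → ℝ} (hv : sq2 v = 0) : v = 0 := by
  funext i
  have := (Finset.sum_eq_zero_iff_of_nonneg (fun i _ => sq_nonneg (v i))).1 hv i (mem_univ i)
  simpa using pow_eq_zero_iff (n := 2) (by norm_num) |>.1 this

lemma nrm_mono {d : ℕ} {u v : Fin d → ℝ} (h : sq2 u ≤ sq2 v) : nrm u ≤ nrm v :=
  Real.sqrt_le_sqrt h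

lemma sq2_smul {d : ℕ} (c : ℝ) (v : Fin d → ℝ) : sq2 (c • v) = c ^ 2 * sq2 v := by
  simp [sq2, Finset.mul_sum, mul_pow]

lemma ip_smul {d : ℕ} (a b : ℝ) (u v : Fin d → ℝ) :
    ip (a • u) (b • v) = a * b * ip u v := by
  simp only [ip, Pi.smul_apply, smul_eq_mul, Finset.mul_sum]
  exact Finset.sum_congr rfl fun i _ => by ring

lemma sq2_add {d : ℕ} (u v : Fin d → ℝ) :
    sq2 (u + v) = sq2 u + sq2 v + 2 * ip u v := by
  simp only [sq2, ip, Pi.add_apply, Finset.mul_sum, ← Finset.sum_add_distrib]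
  exact Finset.sum_congr rfl fun i _ => by ring

lemma sq2_sub {d : ℕ} (u v : Fin d → ℝ) :
    sq2 (u - v) = sq2 u + sq2 v - 2 * ip u v := by
  simp only [sq2, ip, Pi.sub_apply, Finset.mul_sum, ← Finset.sum_sub_distrib,
    ← Finset.sum_add_distrib]
  exact Finset.sum_congr rfl fun i _ => by ring

lemma abs_ip_le {d : ℕ} (u v : Fin d → ℝ) : |ip u v| ≤ nrm u * nrm v := by
  have h := Finset.sum_mul_sq_le_sq_mul_sq Finset.univ u v
  have h2 : |ip u v| = Real.sqrt ((ip u v) ^ 2) := (Real.sqrt_sq_eq_abs _).symm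
  rw [h2, nrm, nrm, ← Real.sqrt_mul (sq2_nonneg u)]
  exact Real.sqrt_le_sqrt h


noncomputable def supp {n : ℕ} (v : Fin n → ℝ) : Finset (Fin n) :=
  Finset.univ.filter fun j => v j ≠ 0

lemma supp_smul_subset {n : ℕ} (c : ℝ) (v : Fin n → ℝ) : supp (c • v) ⊆ supp v := by
  intro i hi
  simp only [supp, mem_filter, mem_univ, true_and, Pi.smul_apply, smul_eq_mul] at *
  exact fun h => hi (by rw [h, mul_zero])

lemma supp_add_subset {n : ℕ} (u v : Fin n → ℝ) : supp (u + v) ⊆ supp u ∪ supp v := by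
  intro i hi
  simp only [supp, mem_filter, mem_univ, true_and, mem_union, Pi.add_apply] at *
  by_contra hc
  push_neg at hc
  exact hi (by rw [hc.1, hc.2, add_zero])

lemma supp_sub_subset {n : ℕ} (u v : Fin n → ℝ) : supp (u - v) ⊆ supp u ∪ supp v := by
  intro i hi
  simp only [supp, mem_filter, mem_univ, true_and, mem_union, Pi.sub_apply] at *
  by_contra hc
  push_neg at hc
  exact hi (by rw [hc.1, hc.2, sub_zero])


lemma ip_eq_zero_of_disj {d : ℕ} {u v : Fin d → ℝ}
    (hdisj : ∀ i, u i = 0 ∨ v i = 0) : ip u v = 0 :=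
  Finset.sum_eq_zero fun i _ => by rcases hdisj i with h | h <;> simp [h]

/-- RIP cross-correlation bound for disjointly supported vectors. -/
lemma cross {m n κ : ℕ} (A : Matrix (Fin m) (Fin n) ℝ) (δ : ℝ) (hδ0 : 0 ≤ δ)
    (hRIP : ∀ z : Fin n → ℝ, (supp z).card ≤ 2 * κ →
      (1 - δ) * sq2 z ≤ sq2 (A.mulVec z) ∧ sq2 (A.mulVec z) ≤ (1 + δ) * sq2 z)
    (u v : Fin n → ℝ) (hdisj : ∀ i, u i = 0 ∨ v i = 0)
    (hcard : (supp u).card + (supp v).card ≤ 2 * κ) :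
    |ip (A.mulVec u) (A.mulVec v)| ≤ δ * (nrm u * nrm v) := by
  rcases eq_or_ne u 0 with rfl | hu0
  · simp only [ip, Matrix.mulVec_zero, Pi.zero_apply, zero_mul, Finset.sum_const_zero, abs_zero]
    exact mul_nonneg hδ0 (mul_nonneg (nrm_nonneg _) (nrm_nonneg _))
  rcases eq_or_ne v 0 with rfl | hv0
  · simp only [ip, Matrix.mulVec_zero, Pi.zero_apply, mul_zero, Finset.sum_const_zero, abs_zero]
    exact mul_nonneg hδ0 (mul_nonneg (nrm_nonneg _) (nrm_nonneg _))
  have hsu : 0 < sq2 u := by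
    rcases lt_or_eq_of_le (sq2_nonneg u) with h | h
    · exact h
    · exact absurd (sq2_eq_zero h.symm) hu0
  have hsv : 0 < sq2 v := by
    rcases lt_or_eq_of_le (sq2_nonneg v) with h | h
    · exact h
    · exact absurd (sq2_eq_zero h.symm) hv0
  have ha : 0 < nrm u := Real.sqrt_pos.2 hsu
  have hb : 0 < nrm v := Real.sqrt_pos.2 hsv
  set a := nrm u with hadef
  set b := nrm v with hbdef
  set u' : Fin n → ℝ := a⁻¹ • u with hu'
  set v' : Fin n → ℝ := b⁻¹ • v with hv'
  have hsu' : sq2 u' = 1 := by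
    rw [hu', sq2_smul, ← nrm_sq u, ← hadef]
    field_simp
  have hsv' : sq2 v' = 1 := by
    rw [hv', sq2_smul, ← nrm_sq v, ← hbdef]
    field_simp
  have hdisj' : ∀ i, u' i = 0 ∨ v' i = 0 := by
    intro i
    rcases hdisj i with h | h
    · exact Or.inl (by simp [hu', h])
    · exact Or.inr (by simp [hv', h])
  have hip0 : ip u' v' = 0 := ip_eq_zero_of_disj hdisj'
  have hcadd : (supp (u' + v')).card ≤ 2 * κ :=
    le_trans (Finset.card_le_card
      (le_trans (supp_add_subset u' v')
        (Finset.union_subset_union (supp_smul_subset _ _) (supp_smul_subset _ _))))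
      (le_trans (Finset.card_union_le _ _) hcard)
  have hcsub : (supp (u' - v')).card ≤ 2 * κ :=
    le_trans (Finset.card_le_card
      (le_trans (supp_sub_subset u' v')
        (Finset.union_subset_union (supp_smul_subset _ _) (supp_smul_subset _ _))))
      (le_trans (Finset.card_union_le _ _) hcard)
  have hplus := hRIP (u' + v') hcadd
  have hminus := hRIP (u' - v') hcsub
  have hsum2 : sq2 (u' + v') = 2 := by rw [sq2_add, hsu', hsv', hip0]; ring
  have hsub2 : sq2 (u' - v') = 2 := by rw [sq2_sub, hsu', hsv', hip0]; ring
  rw [hsum2] at hplus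
  rw [hsub2] at hminus
  have hAadd : A.mulVec (u' + v') = A.mulVec u' + A.mulVec v' := Matrix.mulVec_add A u' v'
  have hAsub : A.mulVec (u' - v') = A.mulVec u' - A.mulVec v' := Matrix.mulVec_sub A u' v'
  have key : sq2 (A.mulVec (u' + v')) - sq2 (A.mulVec (u' - v'))
      = 4 * ip (A.mulVec u') (A.mulVec v') := by
    rw [hAadd, hAsub, sq2_add, sq2_sub]; ring
  have hub : ip (A.mulVec u') (A.mulVec v') ≤ δ := by
    nlinarith [hplus.2, hminus.1, key]
  have hlb : -δ ≤ ip (A.mulVec u') (A.mulVec v') := by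
    nlinarith [hplus.1, hminus.2, key]
  have habs : |ip (A.mulVec u') (A.mulVec v')| ≤ δ := abs_le.2 ⟨hlb, hub⟩
  have hrew : ip (A.mulVec u) (A.mulVec v) = a * b * ip (A.mulVec u') (A.mulVec v') := by
    have hu'' : A.mulVec u = a • A.mulVec u' := by
      rw [hu', Matrix.mulVec_smul, smul_smul, mul_inv_cancel₀ ha.ne', one_smul]
    have hv'' : A.mulVec v = b • A.mulVec v' := by
      rw [hv', Matrix.mulVec_smul, smul_smul, mul_inv_cancel₀ hb.ne', one_smul]
    rw [hu'', hv'', ip_smul]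
  rw [hrew, abs_mul, abs_of_nonneg (by positivity : (0:ℝ) ≤ a * b)]
  calc a * b * |ip (A.mulVec u') (A.mulVec v')| ≤ a * b * δ := by
        exact mul_le_mul_of_nonneg_left habs (by positivity)
    _ = δ * (a * b) := by ring

noncomputable def restr {n : ℕ} (h : Fin n → ℝ) (T : Finset (Fin n)) : Fin n → ℝ :=
  fun i => if i ∈ T then h i else 0

lemma supp_restr {n : ℕ} (h : Fin n → ℝ) (T : Finset (Fin n)) : supp (restr h T) ⊆ T := by
  intro i hi
  simp only [supp, restr, mem_filter, mem_univ, true_and] at hi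
  by_contra hc
  simp [hc] at hi

lemma sq2_restr {n : ℕ} (h : Fin n → ℝ) (T : Finset (Fin n)) :
    sq2 (restr h T) = ∑ i ∈ T, h i ^ 2 := by
  simp only [sq2, restr, apply_ite (· ^ 2)]
  rw [show ((0:ℝ) ^ 2) = 0 by norm_num, Finset.sum_ite_mem, Finset.univ_inter]

lemma l1_le_sqrt_card {n : ℕ} (h : Fin n → ℝ) (T : Finset (Fin n)) :
    (∑ i ∈ T, |h i|) ^ 2 ≤ T.card * sq2 (restr h T) := by
  have := Finset.sum_mul_sq_le_sq_mul_sq T (fun _ => (1:ℝ)) (fun i => |h i|)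
  simp only [one_mul, one_pow, Finset.sum_const, nsmul_eq_mul, mul_one, sq_abs] at this
  rw [sq2_restr]
  exact this

lemma ip_self {d : ℕ} (v : Fin d → ℝ) : ip v v = sq2 v := by
  simp [ip, sq2, sq]

lemma ip_sum_right {d : ℕ} (u : Fin d → ℝ) {β : Type*} (s : Finset β) (f : β → Fin d → ℝ) :
    ip u (∑ j ∈ s, f j) = ∑ j ∈ s, ip u (f j) := by
  simp only [ip, Finset.sum_apply, Finset.mul_sum]
  exact Finset.sum_comm

lemma ip_neg_right {d : ℕ} (u v : Fin d → ℝ) : ip u (-v) = - ip u v := by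
  simp [ip, mul_neg, Finset.sum_neg_distrib]

lemma ip_add_left {d : ℕ} (u v w : Fin d → ℝ) : ip (u + v) w = ip u w + ip v w := by
  simp only [ip, Pi.add_apply, add_mul, Finset.sum_add_distrib]

lemma mulVec_fsum {m n : ℕ} (A : Matrix (Fin m) (Fin n) ℝ) {β : Type*} (s : Finset β)
    (f : β → Fin n → ℝ) : A.mulVec (∑ j ∈ s, f j) = ∑ j ∈ s, A.mulVec (f j) := by
  ext i
  simp only [Matrix.mulVec, dotProduct, Finset.sum_apply, Finset.mul_sum]
  exact Finset.sum_comm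

/-- null space property -/
lemma nsp {m n κ : ℕ} (A : Matrix (Fin m) (Fin n) ℝ) (δ : ℝ) (hδ0 : 0 ≤ δ) (hδ1 : δ < 1)
    (hRIP : ∀ z : Fin n → ℝ, (supp z).card ≤ 2 * κ →
      (1 - δ) * sq2 z ≤ sq2 (A.mulVec z) ∧ sq2 (A.mulVec z) ≤ (1 + δ) * sq2 z)
    (hκ : 1 ≤ κ) (h : Fin n → ℝ) (hker : A.mulVec h = 0)
    (S : Finset (Fin n)) (hS : S.card ≤ κ) :
    ∑ i ∈ S, |h i| ≤ (Real.sqrt 2 * δ / (1 - δ)) * ∑ i ∈ Sᶜ, |h i| := by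
  classical
  have hκ0 : 0 < κ := hκ
  -- sorted list of Sᶜ by decreasing |h|
  set le : Fin n → Fin n → Bool := fun a b => decide (|h b| ≤ |h a|) with hle
  set l : List (Fin n) := Sᶜ.toList.mergeSort le with hl
  have hperm : l.Perm Sᶜ.toList := List.mergeSort_perm _ _
  have hnodup : l.Nodup := hperm.nodup_iff.2 (Finset.nodup_toList _)
  have hmem : ∀ i, i ∈ l ↔ i ∈ Sᶜ := fun i => hperm.mem_iff.trans Finset.mem_toList
  have hsorted : List.Pairwise (fun a b => le a b = true) l := by
    apply List.pairwise_mergeSort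
    · intro a b c h1 h2
      simp only [hle, decide_eq_true_eq] at *
      exact le_trans h2 h1
    · intro a b
      simp only [hle, Bool.or_eq_true, decide_eq_true_eq]
      exact le_total _ _
  set pos : Fin n → ℕ := fun i => l.idxOf i with hpos
  have hposlt : ∀ i ∈ Sᶜ, pos i < l.length := fun i hi =>
    List.idxOf_lt_length_iff.2 ((hmem i).2 hi)
  have hgetpos : ∀ i, ∀ hi : i ∈ Sᶜ, l[pos i]'(hposlt i hi) = i := fun i hi =>
    List.getElem_idxOf (hposlt i hi)
  have hposget : ∀ p, ∀ hp : p < l.length, pos l[p] = p := fun p hp =>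
    hnodup.idxOf_getElem p hp
  have hgetmem : ∀ p, ∀ hp : p < l.length, l[p] ∈ Sᶜ := fun p hp =>
    (hmem _).1 (List.getElem_mem hp)
  have hsortle : ∀ a b, a ∈ Sᶜ → b ∈ Sᶜ → pos a < pos b → |h b| ≤ |h a| := by
    intro a b ha hb hab
    have := List.pairwise_iff_getElem.1 hsorted (pos a) (pos b)
      (hposlt a ha) (hposlt b hb) hab
    rw [hgetpos a ha, hgetpos b hb] at this
    simpa [hle] using this
  have hposinj : ∀ a b, a ∈ Sᶜ → b ∈ Sᶜ → pos a = pos b → a = b := by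
    intro a b ha hb hab
    have h2 : l[pos a]'(hab ▸ hposlt b hb) = b := by
      simp only [hab]
      exact hgetpos b hb
    exact (hgetpos a ha).symm.trans h2
  -- blocks
  set C : ℕ → Finset (Fin n) := fun j => Sᶜ.filter (fun i => pos i / κ = j) with hC
  have hCsub : ∀ j, C j ⊆ Sᶜ := fun j => Finset.filter_subset _ _
  have hCdisj : ∀ j j', j ≠ j' → ∀ i, i ∈ C j → i ∉ C j' := by
    intro j j' hjj i hij hij'
    simp only [hC, mem_filter] at hij hij'
    exact hjj (hij.2 ▸ hij'.2 ▸ rfl)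
  have hicoC : ∀ p : ℕ, 0 < κ → p < (p / κ + 1) * κ := by
    intro p hb
    rw [add_one_mul]
    calc p = κ * (p / κ) + p % κ := (Nat.div_add_mod p κ).symm
      _ < κ * (p / κ) + κ := Nat.add_lt_add_left (Nat.mod_lt p hb) _
      _ = p / κ * κ + κ := by rw [Nat.mul_comm]
  have hicocard : ∀ j : ℕ, (Finset.Ico (j * κ) ((j+1) * κ)).card = κ := by
    intro j
    rw [Nat.card_Ico]
    have : (j+1) * κ = j * κ + κ := by ring
    omega
  have hCmem : ∀ j, ∀ i ∈ C j, pos i ∈ Finset.Ico (j * κ) ((j+1) * κ) := by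
    intro j i hi
    simp only [hC, mem_filter] at hi
    rw [Finset.mem_Ico, ← hi.2]
    exact ⟨Nat.div_mul_le_self _ _, hicoC _ hκ0⟩
  have hCcard : ∀ j, (C j).card ≤ κ := by
    intro j
    have : (C j).card ≤ (Finset.Ico (j * κ) ((j+1) * κ)).card := by
      apply Finset.card_le_card_of_injOn pos (hCmem j)
      intro a ha b hb hab
      exact hposinj a b (mem_filter.1 ha).1 (mem_filter.1 hb).1 hab
    exact this.trans_eq (hicocard j)
  -- fullness of the preceding block
  have hCfull : ∀ j, (C (j+1)).Nonempty → (C j).card = κ := by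
    intro j ⟨a, ha⟩
    have haS : a ∈ Sᶜ := (mem_filter.1 ha).1
    have haj : pos a / κ = j + 1 := (mem_filter.1 ha).2
    have halen : pos a < l.length := hposlt a haS
    have hage : (j+1) * κ ≤ pos a := by
      rw [← haj]
      exact Nat.div_mul_le_self _ _
    refine le_antisymm (hCcard j) ?_
    rw [← hicocard j]
    apply Finset.card_le_card_of_injOn (fun p => l.getD p a)
    · intro p hp
      rw [Finset.mem_coe, Finset.mem_Ico] at hp
      have hplen : p < l.length := lt_of_lt_of_le hp.2 (le_trans hage (Nat.le_of_lt halen))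
      have hg : l.getD p a = l[p]'hplen := List.getD_eq_getElem l a hplen
      beta_reduce
      rw [Finset.mem_coe, hg, hC, mem_filter]
      refine ⟨hgetmem p hplen, ?_⟩
      rw [hposget p hplen]
      exact Nat.div_eq_of_lt_le hp.1 hp.2
    · intro p hp q hq hpq
      simp only [Finset.coe_Ico, Set.mem_Ico] at hp hq
      simp only at hpq
      have hplen : p < l.length := lt_of_lt_of_le hp.2 (le_trans hage (Nat.le_of_lt halen))
      have hqlen : q < l.length := lt_of_lt_of_le hq.2 (le_trans hage (Nat.le_of_lt halen))
      simp only [List.getD_eq_getElem l a hplen, List.getD_eq_getElem l a hqlen] at hpq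
      have := hposget p hplen
      rw [hpq, hposget q hqlen] at this
      exact this.symm
  -- the block-wise estimate
  have hblock : ∀ j : ℕ, nrm (restr h (C (j+1))) ≤ (∑ i ∈ C j, |h i|) / Real.sqrt κ := by
    intro j
    have ht0 : (0:ℝ) ≤ ∑ i ∈ C j, |h i| := Finset.sum_nonneg fun i _ => abs_nonneg _
    have hsκ : (0:ℝ) < Real.sqrt κ := Real.sqrt_pos.2 (by exact_mod_cast hκ0)
    rcases (C (j+1)).eq_empty_or_nonempty with hemp | hne
    · rw [nrm, sq2_restr, hemp, Finset.sum_empty, Real.sqrt_zero]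
      exact div_nonneg ht0 hsκ.le
    · have hfull : (C j).card = κ := hCfull j hne
      set t : ℝ := ∑ i ∈ C j, |h i| with htdef
      have hkey : ∀ a ∈ C (j+1), |h a| ≤ t / κ := by
        intro a ha
        have haS : a ∈ Sᶜ := (mem_filter.1 ha).1
        have haj : pos a / κ = j + 1 := (mem_filter.1 ha).2
        have hlt : ∀ b ∈ C j, |h a| ≤ |h b| := by
          intro b hb
          have hbS : b ∈ Sᶜ := (mem_filter.1 hb).1
          have hbj : pos b / κ = j := (mem_filter.1 hb).2
          apply hsortle b a hbS haS
          by_contra hc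
          push_neg at hc
          have := Nat.div_le_div_right (c := κ) hc
          rw [haj, hbj] at this
          omega
        have : (κ : ℝ) * |h a| ≤ t := by
          calc (κ : ℝ) * |h a| = ∑ _b ∈ C j, |h a| := by
                rw [Finset.sum_const, hfull, nsmul_eq_mul]
            _ ≤ ∑ b ∈ C j, |h b| := Finset.sum_le_sum hlt
        rw [le_div_iff₀ (by exact_mod_cast hκ0)]
        linarith
      have hsq : sq2 (restr h (C (j+1))) ≤ t ^ 2 / κ := by
        rw [sq2_restr]
        calc ∑ i ∈ C (j+1), h i ^ 2 ≤ ∑ i ∈ C (j+1), (t / κ) ^ 2 := by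
              apply Finset.sum_le_sum
              intro i hi
              rw [← sq_abs]
              exact pow_le_pow_left₀ (abs_nonneg _) (hkey i hi) 2
          _ = (C (j+1)).card * (t / κ) ^ 2 := by
              rw [Finset.sum_const, nsmul_eq_mul]
          _ ≤ κ * (t / κ) ^ 2 := by
              apply mul_le_mul_of_nonneg_right _ (sq_nonneg _)
              exact_mod_cast hCcard (j+1)
          _ = t ^ 2 / κ := by
              field_simp
      calc nrm (restr h (C (j+1))) ≤ Real.sqrt (t ^ 2 / κ) := Real.sqrt_le_sqrt hsq
        _ = t / Real.sqrt κ := by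
            rw [Real.sqrt_div (sq_nonneg t), Real.sqrt_sq ht0]
  -- decomposition of h
  set J : ℕ := l.length with hJdef
  have hJ : ∀ i ∈ Sᶜ, pos i / κ < J := fun i hi =>
    lt_of_le_of_lt (Nat.div_le_self _ _) (hposlt i hi)
  have hdecomp : restr h S + ∑ j ∈ Finset.range J, restr h (C j) = h := by
    funext i
    by_cases hiS : i ∈ S
    · have hnot : ∀ j, i ∉ C j := fun j hj => (Finset.mem_compl.1 (hCsub j hj)) hiS
      simp only [Pi.add_apply, Finset.sum_apply, restr, if_pos hiS]
      rw [Finset.sum_eq_zero fun j _ => if_neg (hnot j), add_zero]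
    · have hiSc : i ∈ Sᶜ := Finset.mem_compl.2 hiS
      simp only [Pi.add_apply, Finset.sum_apply, restr, if_neg hiS, zero_add]
      have hcong : ∀ j ∈ Finset.range J,
          (if i ∈ C j then h i else 0) = (if pos i / κ = j then h i else 0) := by
        intro j _
        congr 1
        simp [hC, Finset.mem_filter, hiSc]
      rw [Finset.sum_congr rfl hcong]
      have : ∀ j ∈ Finset.range J,
          (if pos i / κ = j then h i else 0) = (if j = pos i / κ then h i else 0) :=
        fun j _ => by congr 1; simp [eq_comm]
      rw [Finset.sum_congr rfl this, Finset.sum_ite_eq' (Finset.range J) (pos i / κ)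
        (fun _ => h i), if_pos (Finset.mem_range.2 (hJ i hiSc))]
  set uS : Fin n → ℝ := restr h S with huS
  set u0 : Fin n → ℝ := restr h (C 0) with hu0
  set W : Fin n → ℝ := uS + u0 with hW
  have hsplit : h = W + ∑ j ∈ Finset.Ico 1 J, restr h (C j) := by
    rcases Nat.eq_zero_or_pos J with hJ0 | hJpos
    · have hlnil : l = [] := List.length_eq_zero_iff.1 hJ0
      have hSc : ∀ i : Fin n, i ∉ Sᶜ := fun i hi => by
        have := (hmem i).2 hi
        rw [hlnil] at this
        exact List.not_mem_nil this
      have hC0 : restr h (C 0) = 0 := by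
        funext i
        have : i ∉ C 0 := fun hc => hSc i (hCsub 0 hc)
        simp [restr, this]
      rw [hJ0] at hdecomp
      simp only [Finset.range_zero, Finset.sum_empty, add_zero] at hdecomp
      have hu00 : u0 = 0 := by rw [hu0]; exact hC0
      rw [hJ0, show Finset.Ico 1 0 = ∅ from Finset.Ico_eq_empty (by omega),
        Finset.sum_empty, add_zero, hW, hu00, add_zero, hdecomp]
    · calc h = uS + ∑ j ∈ Finset.range J, restr h (C j) := hdecomp.symm
        _ = uS + (restr h (C 0) + ∑ j ∈ Finset.Ico 1 J, restr h (C j)) := by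
            rw [Finset.range_eq_Ico, Finset.sum_eq_sum_Ico_succ_bot hJpos]
        _ = W + ∑ j ∈ Finset.Ico 1 J, restr h (C j) := by rw [hW, hu0]; abel
  -- kernel relation
  have hAW : A.mulVec W = - ∑ j ∈ Finset.Ico 1 J, A.mulVec (restr h (C j)) := by
    have : A.mulVec h = A.mulVec W + ∑ j ∈ Finset.Ico 1 J, A.mulVec (restr h (C j)) := by
      conv_lhs => rw [hsplit]
      rw [Matrix.mulVec_add, mulVec_fsum]
    rw [hker] at this
    exact eq_neg_of_add_eq_zero_left this.symm
  -- supports and disjointness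
  have hsuppS : supp uS ⊆ S := huS ▸ supp_restr h S
  have hsupp0 : supp u0 ⊆ C 0 := hu0 ▸ supp_restr h (C 0)
  have hdisjS0 : ∀ i, uS i = 0 ∨ u0 i = 0 := by
    intro i
    by_cases hiS : i ∈ S
    · have hnot : i ∉ C 0 := fun hc => (Finset.mem_compl.1 (hCsub 0 hc)) hiS
      right; simp [hu0, restr, hnot]
    · left; simp [huS, restr, hiS]
  have hsq2W : sq2 W = sq2 uS + sq2 u0 := by
    rw [hW, sq2_add, ip_eq_zero_of_disj hdisjS0]; ring
  have hcardW : (supp W).card ≤ 2 * κ := by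
    have h1 : supp W ⊆ S ∪ C 0 :=
      subset_trans (hW ▸ supp_add_subset uS u0) (Finset.union_subset_union hsuppS hsupp0)
    calc (supp W).card ≤ (S ∪ C 0).card := Finset.card_le_card h1
      _ ≤ S.card + (C 0).card := Finset.card_union_le _ _
      _ ≤ κ + κ := add_le_add hS (hCcard 0)
      _ = 2 * κ := by ring
  set Sg : ℝ := ∑ j ∈ Finset.Ico 1 J, nrm (restr h (C j)) with hSg
  have hSg0 : 0 ≤ Sg := Finset.sum_nonneg fun _ _ => nrm_nonneg _
  have hcross : ∀ j ∈ Finset.Ico 1 J,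
      -(ip (A.mulVec W) (A.mulVec (restr h (C j)))) ≤
        δ * ((nrm uS + nrm u0) * nrm (restr h (C j))) := by
    intro j hj
    have hj1 : 1 ≤ j := (Finset.mem_Ico.1 hj).1
    set vj : Fin n → ℝ := restr h (C j) with hvj
    have hsuppvj : supp vj ⊆ C j := hvj ▸ supp_restr h (C j)
    have hdisjSvj : ∀ i, uS i = 0 ∨ vj i = 0 := by
      intro i
      by_cases hiS : i ∈ S
      · have hnot : i ∉ C j := fun hc => (Finset.mem_compl.1 (hCsub j hc)) hiS
        right; simp [hvj, restr, hnot]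
      · left; simp [huS, restr, hiS]
    have hdisj0vj : ∀ i, u0 i = 0 ∨ vj i = 0 := by
      intro i
      by_cases hi0 : i ∈ C 0
      · have hnot : i ∉ C j := hCdisj 0 j (by omega) i hi0
        right; simp [hvj, restr, hnot]
      · left; simp [hu0, restr, hi0]
    have hc1 : (supp uS).card + (supp vj).card ≤ 2 * κ := by
      have := (Finset.card_le_card hsuppS).trans hS
      have := (Finset.card_le_card hsuppvj).trans (hCcard j)
      omega
    have hc2 : (supp u0).card + (supp vj).card ≤ 2 * κ := by
      have := (Finset.card_le_card hsupp0).trans (hCcard 0)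
      have := (Finset.card_le_card hsuppvj).trans (hCcard j)
      omega
    have e1 := cross A δ hδ0 hRIP uS vj hdisjSvj hc1
    have e2 := cross A δ hδ0 hRIP u0 vj hdisj0vj hc2
    have hAWsplit : A.mulVec W = A.mulVec uS + A.mulVec u0 := by
      rw [hW, Matrix.mulVec_add]
    calc -(ip (A.mulVec W) (A.mulVec vj)) ≤ |ip (A.mulVec W) (A.mulVec vj)| :=
          neg_le_abs _
      _ = |ip (A.mulVec uS) (A.mulVec vj) + ip (A.mulVec u0) (A.mulVec vj)| := by
          rw [hAWsplit, ip_add_left]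
      _ ≤ |ip (A.mulVec uS) (A.mulVec vj)| + |ip (A.mulVec u0) (A.mulVec vj)| := abs_add_le _ _
      _ ≤ δ * (nrm uS * nrm vj) + δ * (nrm u0 * nrm vj) := add_le_add e1 e2
      _ = δ * ((nrm uS + nrm u0) * nrm vj) := by ring
  have hmain : sq2 (A.mulVec W) ≤ δ * ((nrm uS + nrm u0) * Sg) := by
    have hrw : sq2 (A.mulVec W)
        = -∑ j ∈ Finset.Ico 1 J, ip (A.mulVec W) (A.mulVec (restr h (C j))) := by
      calc sq2 (A.mulVec W) = ip (A.mulVec W) (A.mulVec W) := (ip_self _).symm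
        _ = ip (A.mulVec W) (-∑ j ∈ Finset.Ico 1 J, A.mulVec (restr h (C j))) :=
            congrArg _ hAW
        _ = -∑ j ∈ Finset.Ico 1 J, ip (A.mulVec W) (A.mulVec (restr h (C j))) := by
            rw [ip_neg_right, ip_sum_right]
    rw [hrw]
    calc -∑ j ∈ Finset.Ico 1 J, ip (A.mulVec W) (A.mulVec (restr h (C j)))
        = ∑ j ∈ Finset.Ico 1 J, -(ip (A.mulVec W) (A.mulVec (restr h (C j)))) := by
          rw [Finset.sum_neg_distrib]
      _ ≤ ∑ j ∈ Finset.Ico 1 J, δ * ((nrm uS + nrm u0) * nrm (restr h (C j))) :=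
          Finset.sum_le_sum hcross
      _ = δ * ((nrm uS + nrm u0) * Sg) := by
          rw [hSg, Finset.mul_sum, Finset.mul_sum]
  have hab2 : nrm uS + nrm u0 ≤ Real.sqrt 2 * nrm W := by
    have ha := nrm_sq uS
    have hb := nrm_sq u0
    have h1 : (nrm uS + nrm u0) ^ 2 ≤ 2 * sq2 W := by
      nlinarith [sq_nonneg (nrm uS - nrm u0), hsq2W]
    have h0 : 0 ≤ nrm uS + nrm u0 := add_nonneg (nrm_nonneg _) (nrm_nonneg _)
    calc nrm uS + nrm u0 = Real.sqrt ((nrm uS + nrm u0) ^ 2) := (Real.sqrt_sq h0).symm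
      _ ≤ Real.sqrt (2 * sq2 W) := Real.sqrt_le_sqrt h1
      _ = Real.sqrt 2 * nrm W := by
          rw [Real.sqrt_mul (by norm_num : (0:ℝ) ≤ 2)]
          rfl
  have hlow : (1 - δ) * sq2 W ≤ sq2 (A.mulVec W) := (hRIP W hcardW).1
  have h1δ : 0 < 1 - δ := by linarith
  have hsκ : (0:ℝ) < Real.sqrt κ := Real.sqrt_pos.2 (by exact_mod_cast hκ0)
  have hWb : nrm W ≤ Real.sqrt 2 * δ / (1 - δ) * Sg := by
    have e1 : δ * ((nrm uS + nrm u0) * Sg) ≤ δ * (Real.sqrt 2 * nrm W * Sg) :=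
      mul_le_mul_of_nonneg_left (mul_le_mul_of_nonneg_right hab2 hSg0) hδ0
    have e2 : (1 - δ) * nrm W ^ 2 ≤ δ * (Real.sqrt 2 * nrm W * Sg) := by
      rw [nrm_sq W]
      exact le_trans hlow (le_trans hmain e1)
    rcases eq_or_lt_of_le (nrm_nonneg W) with hW0 | hW0
    · rw [← hW0]
      exact mul_nonneg (div_nonneg (mul_nonneg (Real.sqrt_nonneg 2) hδ0) h1δ.le) hSg0
    · have e3 : (1 - δ) * nrm W ≤ Real.sqrt 2 * δ * Sg := by
        have := e2
        nlinarith [hW0]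
      rw [div_mul_eq_mul_div, le_div_iff₀ h1δ]
      linarith
  have hSgb : Sg ≤ (∑ i ∈ Sᶜ, |h i|) / Real.sqrt κ := by
    have e1 : Sg = ∑ k ∈ Finset.range (J - 1), nrm (restr h (C (1 + k))) := by
      rw [hSg, Finset.sum_Ico_eq_sum_range]
    have e2 : ∀ k ∈ Finset.range (J - 1),
        nrm (restr h (C (1 + k))) ≤ (∑ i ∈ C k, |h i|) / Real.sqrt κ := by
      intro k _
      rw [add_comm 1 k]
      exact hblock k
    calc Sg ≤ ∑ k ∈ Finset.range (J - 1), (∑ i ∈ C k, |h i|) / Real.sqrt κ := by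
          rw [e1]; exact Finset.sum_le_sum e2
      _ = (∑ k ∈ Finset.range (J - 1), ∑ i ∈ C k, |h i|) / Real.sqrt κ := by
          rw [Finset.sum_div]
      _ ≤ (∑ k ∈ Finset.range J, ∑ i ∈ C k, |h i|) / Real.sqrt κ := by
          apply (div_le_div_iff_of_pos_right hsκ).2
          exact Finset.sum_le_sum_of_subset_of_nonneg
            (Finset.range_mono (by omega : J - 1 ≤ J))
            (fun k _ _ => Finset.sum_nonneg fun i _ => abs_nonneg _)
      _ = (∑ i ∈ Sᶜ, |h i|) / Real.sqrt κ := by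
          congr 1
          exact Finset.sum_fiberwise_of_maps_to
            (fun i hi => Finset.mem_range.2 (hJ i hi)) _
  have hfin : ∑ i ∈ S, |h i| ≤ Real.sqrt κ * nrm W := by
    have e0 : 0 ≤ ∑ i ∈ S, |h i| := Finset.sum_nonneg fun i _ => abs_nonneg _
    have e1 : (∑ i ∈ S, |h i|) ^ 2 ≤ κ * sq2 W := by
      have hl1 := l1_le_sqrt_card h S
      have h2 : sq2 (restr h S) ≤ sq2 W := by
        rw [hsq2W, ← huS]
        linarith [sq2_nonneg u0]
      calc (∑ i ∈ S, |h i|) ^ 2 ≤ S.card * sq2 (restr h S) := hl1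
        _ ≤ κ * sq2 W := by
            apply mul_le_mul _ h2 (by rw [huS] at *; exact sq2_nonneg _) (by positivity)
            exact_mod_cast hS
    calc ∑ i ∈ S, |h i| = Real.sqrt ((∑ i ∈ S, |h i|) ^ 2) := (Real.sqrt_sq e0).symm
      _ ≤ Real.sqrt (κ * sq2 W) := Real.sqrt_le_sqrt e1
      _ = Real.sqrt κ * nrm W := by
          rw [Real.sqrt_mul (by positivity : (0:ℝ) ≤ (κ:ℝ))]
          rfl
  have hρ0 : 0 ≤ Real.sqrt 2 * δ / (1 - δ) :=
    div_nonneg (mul_nonneg (Real.sqrt_nonneg 2) hδ0) h1δ.le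
  calc ∑ i ∈ S, |h i| ≤ Real.sqrt κ * nrm W := hfin
    _ ≤ Real.sqrt κ * (Real.sqrt 2 * δ / (1 - δ) * Sg) :=
        mul_le_mul_of_nonneg_left hWb hsκ.le
    _ ≤ Real.sqrt κ * (Real.sqrt 2 * δ / (1 - δ) * ((∑ i ∈ Sᶜ, |h i|) / Real.sqrt κ)) :=
        mul_le_mul_of_nonneg_left (mul_le_mul_of_nonneg_left hSgb hρ0) hsκ.le
    _ = Real.sqrt 2 * δ / (1 - δ) * ∑ i ∈ Sᶜ, |h i| := by
        field_simp


end BPaux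

/-- **Exact recovery by Basis Pursuit.**  If `A` satisfies RIP of order `2κ` with
constant `δ < √2 − 1` and `x` is `κ`-sparse, then `x` is the unique minimizer of
`‖z‖₁` over `{z : Az = Ax}`. -/
theorem basis_pursuit_exact_recovery
    {m n κ : ℕ}
    (A : Matrix (Fin m) (Fin n) ℝ) (δ : ℝ) (hδ0 : 0 ≤ δ)
    (hδ : δ < Real.sqrt 2 - 1)
    (hRIP : ∀ z : Fin n → ℝ, IsSparse (2 * κ) z →
      (1 - δ) * (∑ j, (z j) ^ 2) ≤ (∑ i, (A.mulVec z i) ^ 2) ∧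
      (∑ i, (A.mulVec z i) ^ 2) ≤ (1 + δ) * (∑ j, (z j) ^ 2))
    (x : Fin n → ℝ) (hx : IsSparse κ x) :
    (∀ z : Fin n → ℝ, A.mulVec z = A.mulVec x → norm1 x ≤ norm1 z) ∧
    (∀ z : Fin n → ℝ, A.mulVec z = A.mulVec x → norm1 z = norm1 x → z = x) := by
  classical
  have hsqrt2 : Real.sqrt 2 ^ 2 = 2 := Real.sq_sqrt (by norm_num)
  have hsqrt2nn : 0 ≤ Real.sqrt 2 := Real.sqrt_nonneg 2
  have hδ1 : δ < 1 := by nlinarith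
  -- the key pointwise claim
  have key : ∀ z : Fin n → ℝ, A.mulVec z = A.mulVec x →
      norm1 x ≤ norm1 z ∧ (norm1 z = norm1 x → z = x) := by
    intro z hz
    set h : Fin n → ℝ := z - x with hh
    have hker : A.mulVec h = 0 := by
      rw [hh, Matrix.mulVec_sub, hz, sub_self]
    have hzxh : z = x + h := by rw [hh]; ring
    rcases Nat.eq_zero_or_pos κ with hκ0 | hκpos
    · -- κ = 0 : x = 0
      have hx0 : x = 0 := by
        funext i
        by_contra hc
        have : i ∈ Finset.univ.filter fun j => x j ≠ 0 := by
          simp only [Finset.mem_filter, Finset.mem_univ, true_and]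
          exact hc
        have hcard := Finset.card_pos.2 ⟨i, this⟩
        have hx' : (Finset.univ.filter fun j => x j ≠ 0).card ≤ κ := hx
        omega
      have hn1x : norm1 x = 0 := by simp [norm1, hx0]
      constructor
      · rw [hn1x]
        exact Finset.sum_nonneg fun i _ => abs_nonneg _
      · intro hzx
        rw [hn1x] at hzx
        have : ∀ i ∈ Finset.univ, |z i| = 0 := by
          intro i _
          have := (Finset.sum_eq_zero_iff_of_nonneg
            (fun i _ => abs_nonneg (z i))).1 hzx i (Finset.mem_univ i)
          exact this
        funext i
        rw [hx0]
        simpa using abs_eq_zero.1 (this i (Finset.mem_univ i))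
    · -- κ ≥ 1 : use the null space property
      set S : Finset (Fin n) := Finset.univ.filter fun j => x j ≠ 0 with hSdef
      have hS : S.card ≤ κ := hx
      have hRIP' : ∀ w : Fin n → ℝ, (BPaux.supp w).card ≤ 2 * κ →
          (1 - δ) * BPaux.sq2 w ≤ BPaux.sq2 (A.mulVec w) ∧
          BPaux.sq2 (A.mulVec w) ≤ (1 + δ) * BPaux.sq2 w := by
        intro w hw
        exact hRIP w hw
      have hnsp := BPaux.nsp A δ hδ0 hδ1 hRIP' hκpos h hker S hS
      set ρ : ℝ := Real.sqrt 2 * δ / (1 - δ) with hρ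
      have h1δ : 0 < 1 - δ := by linarith
      have hρ0 : 0 ≤ ρ := div_nonneg (mul_nonneg hsqrt2nn hδ0) h1δ.le
      have hρ1 : ρ < 1 := by
        rw [hρ, div_lt_one h1δ]
        nlinarith
      have hxoff : ∀ i, i ∉ S → x i = 0 := by
        intro i hi
        by_contra hc
        exact hi (by simp [hSdef, Finset.mem_filter, hc])
      have hn1x : norm1 x = ∑ i ∈ S, |x i| := by
        have hc0 : ∑ i ∈ Sᶜ, |x i| = 0 :=
          Finset.sum_eq_zero fun i hi => by
            rw [hxoff i (Finset.mem_compl.1 hi), abs_zero]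
        rw [norm1, ← Finset.sum_add_sum_compl S, hc0, add_zero]
      have hlower : norm1 x + (1 - ρ) * ∑ i ∈ Sᶜ, |h i| ≤ norm1 z := by
        have hz1 : norm1 z = ∑ i ∈ S, |x i + h i| + ∑ i ∈ Sᶜ, |h i| := by
          rw [norm1, ← Finset.sum_add_sum_compl S]
          congr 1
          · exact Finset.sum_congr rfl fun i _ => by rw [hzxh]; rfl
          · exact Finset.sum_congr rfl fun i hi => by
              rw [hzxh, Pi.add_apply, hxoff i (Finset.mem_compl.1 hi), zero_add]
        have hterm : ∀ i ∈ S, |x i| - |h i| ≤ |x i + h i| := by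
          intro i _
          have h1 : |x i| = |(x i + h i) - h i| := by ring_nf
          have h2 : |(x i + h i) - h i| ≤ |x i + h i| + |h i| := abs_sub _ _
          linarith [h1 ▸ h2]
        have hsum : ∑ i ∈ S, (|x i| - |h i|) ≤ ∑ i ∈ S, |x i + h i| :=
          Finset.sum_le_sum hterm
        rw [Finset.sum_sub_distrib] at hsum
        rw [hz1, hn1x]
        linarith [hnsp]
      have hSc0 : 0 ≤ ∑ i ∈ Sᶜ, |h i| := Finset.sum_nonneg fun i _ => abs_nonneg _
      constructor
      · nlinarith [hlower, hSc0]
      · intro hzx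
        have hSceq : ∑ i ∈ Sᶜ, |h i| = 0 := by nlinarith [hlower, hSc0]
        have hSeq : ∑ i ∈ S, |h i| = 0 := by
          have h1 : ∑ i ∈ S, |h i| ≤ ρ * ∑ i ∈ Sᶜ, |h i| := hnsp
          rw [hSceq, mul_zero] at h1
          exact le_antisymm h1 (Finset.sum_nonneg fun i _ => abs_nonneg _)
        have hzero : ∀ i, h i = 0 := by
          intro i
          by_cases hi : i ∈ S
          · exact abs_eq_zero.1 ((Finset.sum_eq_zero_iff_of_nonneg
              (fun i _ => abs_nonneg (h i))).1 hSeq i hi)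
          · exact abs_eq_zero.1 ((Finset.sum_eq_zero_iff_of_nonneg
              (fun i _ => abs_nonneg (h i))).1 hSceq i (Finset.mem_compl.2 hi))
        funext i
        have := hzero i
        rw [hh] at this
        simpa [sub_eq_zero] using this
  exact ⟨fun z hz => (key z hz).1, fun z hz he => (key z hz).2 he⟩
end

section
/- (Warm-start distance bound.) Let n ≥ 1 and 1 ≤ τ ≤ n. Let x^{(i−1)}, x^{(i)} ∈ ℝ^n be two overlapping windows of a data stream, i.e., x^{(i)}_j = x^{(i−1)}_{j+τ} for j = 0,…,n−1−τ. Let x⋆^{(i−1)}, x⋆^{(i)} ∈ ℝ^n be arbitrary (the optimal LASSO solutions of the two windows), and define the warm start x̂₀ ∈ ℝ^n by x̂₀_j = x⋆^{(i−1)}_{j+τ} for j = 0,…,n−1−τ and x̂₀_j = 0 for j = n−τ,…,n−1. Then ‖x̂₀ − x⋆^{(i)}‖₂ ≤ ‖x⋆^{(i−1)} − x^{(i−1)}‖₂ + ‖x⋆^{(i)} − x^{(i)}‖₂ + ‖(x^{(i)}_{n−τ}, …, x^{(i)}_{n−1})‖₂. Consequently, if each optimization error satisfies the LASSO bound ‖x⋆^{(j)}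 − x^{(j)}‖₂ ≤ c₀‖x^{(j)} − x^{(j)}_κ‖₁/√κ + c₁σ̃ for j = i−1, i, then ‖x̂₀ − x⋆^{(i)}‖₂ ≤ c₀‖x^{(i−1)} − x^{(i−1)}_κ‖₁/√κ + c₀‖x^{(i)} − x^{(i)}_κ‖₁/√κ + 2c₁σ̃ + ‖(x^{(i)}_{n−τ}, …, x^{(i)}_{n−1})‖₂. -/
open Finset

/-- Euclidean norm. -/
noncomputable def norm2 {d : ℕ} (v : Fin d → ℝ) : ℝ := Real.sqrt (∑ i, (v i) ^ 2)

private lemma norm2_eq_norm {d : ℕ} (v : Fin d → ℝ) :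
    norm2 v = ‖(WithLp.equiv 2 (Fin d → ℝ)).symm v‖ := by
  rw [EuclideanSpace.norm_eq]; simp [norm2, sq_abs]

private lemma norm2_add3_le {d : ℕ} (u v w : Fin d → ℝ) :
    norm2 (u + v + w) ≤ norm2 u + norm2 v + norm2 w := by
  simp only [norm2_eq_norm]
  calc ‖(WithLp.equiv 2 (Fin d → ℝ)).symm (u + v + w)‖
      = ‖(WithLp.equiv 2 (Fin d → ℝ)).symm u + (WithLp.equiv 2 (Fin d → ℝ)).symm v
          + (WithLp.equiv 2 (Fin d → ℝ)).symm w‖ := by simp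
    _ ≤ _ := norm_add₃_le

/-- **Warm-start distance bound.**  If consecutive windows overlap with step `τ`
(`x⁽ⁱ⁾_j = x⁽ⁱ⁻¹⁾_{j+τ}` for `j ≤ n−1−τ`) and the warm start `x̂₀` is the shifted
previous optimum padded with zeros, then
`‖x̂₀ − x⋆⁽ⁱ⁾‖₂ ≤ ‖x⋆⁽ⁱ⁻¹⁾ − x⁽ⁱ⁻¹⁾‖₂ + ‖x⋆⁽ⁱ⁾ − x⁽ⁱ⁾‖₂ + ‖(x⁽ⁱ⁾_{n−τ},…,x⁽ⁱ⁾_{n−1})‖₂`;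
consequently, if each optimization error obeys the LASSO bound
`‖x⋆⁽ʲ⁾ − x⁽ʲ⁾‖₂ ≤ c₀‖x⁽ʲ⁾ − x⁽ʲ⁾_κ‖₁/√κ + c₁σ̃`, the warm-start distance is bounded by
`c₀‖x⁽ⁱ⁻¹⁾ − x⁽ⁱ⁻¹⁾_κ‖₁/√κ + c₀‖x⁽ⁱ⁾ − x⁽ⁱ⁾_κ‖₁/√κ + 2c₁σ̃ + ‖(x⁽ⁱ⁾_{n−τ},…)‖₂`. -/
theorem warm_start_distance_bound
    {n : ℕ} (τ : ℕ) (hτ1 : 1 ≤ τ) (hτn : τ ≤ n)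
    (xprev xcur : Fin n → ℝ)
    (hoverlap : ∀ j : Fin n, ∀ h : (j : ℕ) + τ < n, xcur j = xprev ⟨(j : ℕ) + τ, h⟩)
    (xsprev xscur : Fin n → ℝ)
    (x0 : Fin n → ℝ)
    (hx0 : ∀ j : Fin n,
      x0 j = if h : (j : ℕ) + τ < n then xsprev ⟨(j : ℕ) + τ, h⟩ else 0)
    (tail : ℝ)
    (htail : tail =
      Real.sqrt (∑ j ∈ Finset.univ.filter fun j : Fin n => n - τ ≤ (j : ℕ), (xcur j) ^ 2)) :
    norm2 (x0 - xscur) ≤ norm2 (xsprev - xprev) + norm2 (xscur - xcur) + tail ∧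
    (∀ (c0 c1 σt : ℝ) (κ : ℕ) (xκprev xκcur : Fin n → ℝ),
      norm2 (xsprev - xprev) ≤ c0 * norm1 (xprev - xκprev) / Real.sqrt κ + c1 * σt →
      norm2 (xscur - xcur) ≤ c0 * norm1 (xcur - xκcur) / Real.sqrt κ + c1 * σt →
      norm2 (x0 - xscur) ≤
        c0 * norm1 (xprev - xκprev) / Real.sqrt κ +
          c0 * norm1 (xcur - xκcur) / Real.sqrt κ + 2 * c1 * σt + tail) := by
  -- decomposition
  set a : Fin n → ℝ := fun j =>
    if h : (j : ℕ) + τ < n then xsprev ⟨(j : ℕ) + τ, h⟩ - xprev ⟨(j : ℕ) + τ, h⟩ else 0 with ha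
  set b : Fin n → ℝ := fun j => xcur j - xscur j with hb
  set c : Fin n → ℝ := fun j => if (j : ℕ) + τ < n then 0 else -xcur j with hc
  have hdecomp : x0 - xscur = a + b + c := by
    funext j
    simp only [Pi.sub_apply, Pi.add_apply, ha, hb, hc, hx0 j]
    by_cases h : (j : ℕ) + τ < n
    · rw [dif_pos h, dif_pos h, if_pos h, hoverlap j h]; ring
    · rw [dif_neg h, dif_neg h, if_neg h]; ring
  have hA : norm2 a ≤ norm2 (xsprev - xprev) := by
    apply Real.sqrt_le_sqrt
    have h1 : ∑ j, a j ^ 2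
        = ∑ j ∈ Finset.univ.filter (fun j : Fin n => (j : ℕ) + τ < n), a j ^ 2 := by
      refine (Finset.sum_filter_of_ne ?_).symm
      intro j _ hne
      by_contra h
      simp [ha, dif_neg h] at hne
    set s : Fin n → Fin n := fun j => if h : (j : ℕ) + τ < n then ⟨(j : ℕ) + τ, h⟩ else j
      with hs
    have h2 : ∑ j ∈ Finset.univ.filter (fun j : Fin n => (j : ℕ) + τ < n), a j ^ 2
        = ∑ k ∈ (Finset.univ.filter (fun j : Fin n => (j : ℕ) + τ < n)).image s,
            ((xsprev - xprev) k) ^ 2 := by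
      rw [Finset.sum_image ?_]
      · refine Finset.sum_congr rfl ?_
        intro j hj
        rw [Finset.mem_filter] at hj
        simp [ha, hs, dif_pos hj.2]
      · intro x hx y hy hxy
        rw [Finset.mem_coe, Finset.mem_filter] at hx hy
        simp only [hs, dif_pos hx.2, dif_pos hy.2] at hxy
        have := congrArg (Fin.val) hxy
        simp at this
        exact Fin.ext (by omega)
    rw [h1, h2]
    refine Finset.sum_le_sum_of_subset_of_nonneg (Finset.subset_univ _) ?_
    intro k _ _
    positivity
  have hB : norm2 b = norm2 (xscur - xcur) := by
    unfold norm2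
    congr 1
    refine Finset.sum_congr rfl fun j _ => ?_
    simp only [hb, Pi.sub_apply]
    ring
  have hC : norm2 c = tail := by
    rw [htail]
    unfold norm2
    congr 1
    rw [Finset.sum_filter]
    refine Finset.sum_congr rfl fun j _ => ?_
    have hj := j.2
    by_cases h : (j : ℕ) + τ < n
    · have : ¬ (n - τ ≤ (j : ℕ)) := by omega
      simp [hc, if_pos h, this]
    · have : n - τ ≤ (j : ℕ) := by omega
      simp [hc, if_neg h, this]
  have hmain : norm2 (x0 - xscur) ≤ norm2 (xsprev - xprev) + norm2 (xscur - xcur) + tail := by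
    rw [hdecomp]
    calc norm2 (a + b + c) ≤ norm2 a + norm2 b + norm2 c := norm2_add3_le a b c
      _ ≤ _ := by rw [hB, hC]; linarith
  refine ⟨hmain, ?_⟩
  intro c0 c1 σt κ xκprev xκcur h1 h2
  linarith
end

section
/- (Expected model-mismatch error for the i.i.d. sparse stream model.) Let n ≥ 1, 0 ≤ κ ≤ n, p ∈ (0,1], A > 0, and let X be a random vector in ℝ^n whose entries are i.i.d., each equal to 0 with probability 1−p and, with probability p, uniformly distributed on [−A, A]. Let X_κ denote the vector obtained from X by keeping the κ entries of largest absolute value and setting the rest to 0 (ties occur with probability zero). Then E[ ‖X − X_κ‖₁ ] = A · Σ_{k=κ+1}^{n} C(n,k) p^k (1−p)^{n−k} · Σ_{i=κ+1}^{k} (1 − i/(k+1)). -/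
open Finset MeasureTheory ProbabilityTheory
open scoped Classical

noncomputable def cc (n κ k : ℕ) : ℝ :=
  (n.choose k : ℝ) * ((k:ℝ) - κ) * ((k:ℝ) - κ + 1) / (2*((k:ℝ)+1))

noncomputable def dd (n κ k : ℕ) : ℝ := (n.choose k : ℝ) * ((k:ℝ) - κ)

lemma coeff_id (n κ k : ℕ) (h1 : κ + 2 ≤ k) (h2 : k ≤ n) :
    cc n κ k * ((k:ℝ)+1) - dd n κ k = cc n κ (k-1) * ((n:ℝ) - k + 1) := by
  have hk1 : ((k:ℝ)+1) ≠ 0 := by positivity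
  have hk0 : ((k:ℝ)) ≠ 0 := by
    have : 0 < k := by omega
    positivity
  have hnat : n.choose k * k = n.choose (k-1) * (n - (k-1)) := by
    have := Nat.choose_succ_right_eq n (k-1)
    have hk : k - 1 + 1 = k := by omega
    rw [hk] at this
    exact this
  have hc1 : ((k - 1 : ℕ) : ℝ) = (k:ℝ) - 1 := by
    have : 1 ≤ k := by omega
    push_cast [this]; ring
  have hc2 : ((n - (k-1) : ℕ) : ℝ) = (n:ℝ) - (k:ℝ) + 1 := by
    have h3 : k - 1 ≤ n := by omega
    push_cast [h3, hc1]; ring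
  have hcast : (n.choose k : ℝ) * k = (n.choose (k-1) : ℝ) * ((n:ℝ) - k + 1) := by
    have := congrArg (fun m : ℕ => (m : ℝ)) hnat
    push_cast at this
    rw [hc2] at this
    exact this
  have e1 : cc n κ k * ((k:ℝ)+1) = (n.choose k:ℝ)*((k:ℝ)-κ)*((k:ℝ)-κ+1)/2 := by
    rw [cc]; field_simp
  have e2 : cc n κ (k-1) * ((n:ℝ)-k+1) = (n.choose k:ℝ)*((k:ℝ)-1-κ)*((k:ℝ)-κ)/2 := by
    rw [cc, hc1]
    have h3 : (k:ℝ) - 1 + 1 = k := by ring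
    rw [h3]
    calc _ = ((n.choose (k-1):ℝ) * ((n:ℝ)-k+1)) * ((k:ℝ)-1-κ) * ((k:ℝ)-κ) / (2*k) := by ring
      _ = _ := by
        rw [← hcast, div_eq_div_iff (mul_ne_zero two_ne_zero hk0) two_ne_zero]
        ring
  rw [e1, e2, dd]
  ring

lemma sum_rearrange (n κ : ℕ) (hκ : κ ≤ n) (u v : ℝ) :
    ∑ k ∈ Finset.Icc (κ+1) n,
      (cc n κ k * (((k:ℝ)+1) * u^k * v^(n-k)) -
        cc n κ k * (((n:ℝ)-(k:ℝ)) * u^(k+1) * v^(n-k-1)))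
    = ∑ k ∈ Finset.Icc (κ+1) n, dd n κ k * (u^k * v^(n-k)) := by
  rcases Nat.eq_or_lt_of_le hκ with rfl | hlt
  · simp
  obtain ⟨m, rfl⟩ : ∃ m, n = m + 1 := ⟨n-1, by omega⟩
  have hκm : κ ≤ m := by omega
  push_cast
  set a : ℕ → ℝ := fun k => cc (m+1) κ k * (((k:ℝ)+1) * u^k * v^(m+1-k)) with ha
  set b : ℕ → ℝ := fun k => cc (m+1) κ k * ((((m:ℝ)+1)-(k:ℝ)) * u^(k+1) * v^(m+1-k-1)) with hb
  set d : ℕ → ℝ := fun k => dd (m+1) κ k * (u^k * v^(m+1-k)) with hd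
  have key : ∑ k ∈ Finset.Icc (κ+1) (m+1), (a k - d k) = ∑ k ∈ Finset.Icc (κ+1) (m+1), b k := by
    -- RHS: drop top term (it is zero)
    have hbtop : ∑ k ∈ Finset.Icc (κ+1) (m+1), b k = ∑ k ∈ Finset.Icc (κ+1) m, b k := by
      rw [Finset.sum_Icc_succ_top (by omega : κ + 1 ≤ m + 1)]
      have : b (m+1) = 0 := by
        simp only [hb]
        push_cast
        ring
      rw [this, add_zero]
    -- LHS: split off head term
    have hsplit : Finset.Icc (κ+1) (m+1) = insert (κ+1) (Finset.Icc (κ+2) (m+1)) := by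
      ext x
      simp only [Finset.mem_Icc, Finset.mem_insert]
      omega
    have hhead : a (κ+1) - d (κ+1) = 0 := by
      have hcoeff : cc (m+1) κ (κ+1) * (((κ+1:ℕ):ℝ)+1) - dd (m+1) κ (κ+1) = 0 := by
        rw [cc, dd]
        have : ((κ:ℝ)+1+1) ≠ 0 := by positivity
        push_cast
        field_simp
        ring
      simp only [ha, hd]
      have hexp0 : m + 1 - (κ+1) = m - κ := by omega
      rw [hexp0]
      push_cast at hcoeff ⊢
      linear_combination (u ^ (κ + 1) * v ^ (m - κ)) * hcoeff
    -- reindex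
    have himg : Finset.Icc (κ+2) (m+1) = Finset.image (· + 1) (Finset.Icc (κ+1) m) := by
      ext x
      simp only [Finset.mem_Icc, Finset.mem_image]
      constructor
      · intro hx; exact ⟨x-1, by omega, by omega⟩
      · rintro ⟨y, hy, rfl⟩; omega
    have hterm : ∀ j ∈ Finset.Icc (κ+1) m, a (j+1) - d (j+1) = b j := by
      intro j hj
      rw [Finset.mem_Icc] at hj
      have h1 : κ + 2 ≤ j + 1 := by omega
      have h2 : j + 1 ≤ m + 1 := by omega
      have hco := coeff_id (m+1) κ (j+1) h1 h2
      have hj1 : (j+1) - 1 = j := by omega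
      rw [hj1] at hco
      have hexp : m + 1 - (j+1) = m + 1 - j - 1 := by omega
      simp only [ha, hd, hb, hexp]
      have hc' : ((j+1:ℕ):ℝ) = (j:ℝ)+1 := by push_cast; ring
      calc cc (m+1) κ (j+1) * (((((j+1:ℕ)):ℝ)+1) * u^(j+1) * v^(m+1-j-1)) -
            dd (m+1) κ (j+1) * (u^(j+1) * v^(m+1-j-1)) =
          (cc (m+1) κ (j+1) * (((j+1:ℕ):ℝ)+1) - dd (m+1) κ (j+1)) * (u^(j+1) * v^(m+1-j-1)) := by ring
        _ = cc (m+1) κ j * ((((m+1:ℕ)):ℝ) - ((j+1:ℕ):ℝ) + 1) * (u^(j+1) * v^(m+1-j-1)) := by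
            rw [hco]
        _ = cc (m+1) κ j * ((((m:ℝ)+1)-(j:ℝ)) * u^(j+1) * v^(m+1-j-1)) := by push_cast; ring
    calc ∑ k ∈ Finset.Icc (κ+1) (m+1), (a k - d k)
        = (a (κ+1) - d (κ+1)) + ∑ k ∈ Finset.Icc (κ+2) (m+1), (a k - d k) := by
          rw [hsplit, Finset.sum_insert (by simp)]
      _ = ∑ k ∈ Finset.Icc (κ+2) (m+1), (a k - d k) := by rw [hhead, zero_add]
      _ = ∑ j ∈ Finset.Icc (κ+1) m, (a (j+1) - d (j+1)) := by
          rw [himg, Finset.sum_image (by intro x _ y _ h; simpa using h)]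
      _ = ∑ j ∈ Finset.Icc (κ+1) m, b j := Finset.sum_congr rfl hterm
      _ = ∑ k ∈ Finset.Icc (κ+1) (m+1), b k := hbtop.symm
  have := Finset.sum_sub_distrib (s := Finset.Icc (κ+1) (m+1)) (f := a) (g := d)
  rw [Finset.sum_sub_distrib]
  rw [Finset.sum_sub_distrib] at key
  linarith

lemma hasDerivAt_H (n κ : ℕ) (hκ : κ ≤ n) (u : ℝ) :
    HasDerivAt (fun x : ℝ => ∑ k ∈ Finset.Icc (κ+1) n, cc n κ k * (x^(k+1) * (1-x)^(n-k)))
      (∑ k ∈ Finset.Icc (κ+1) n, dd n κ k * (u^k * (1-u)^(n-k))) u := by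
  rw [← sum_rearrange n κ hκ u (1-u)]
  apply HasDerivAt.fun_sum
  intro k hk
  rw [Finset.mem_Icc] at hk
  have h1 : HasDerivAt (fun x : ℝ => x^(k+1)) (((k:ℝ)+1) * u^k) u := by
    have := hasDerivAt_pow (k+1) u
    simpa using this
  have h2 : HasDerivAt (fun x : ℝ => (1-x)^(n-k)) (-(((n-k:ℕ)):ℝ) * (1-u)^(n-k-1)) u := by
    have hs : HasDerivAt (fun x : ℝ => 1 - x) (-1) u := by
      simpa using (hasDerivAt_id u).const_sub 1
    have := hs.pow (n-k)
    refine this.congr_deriv ?_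
    ring
  have := (h1.mul h2).const_mul (cc n κ k)
  refine this.congr_deriv ?_
  have hcast : (((n-k:ℕ)):ℝ) = (n:ℝ) - k := by
    have : k ≤ n := hk.2
    push_cast [this]; ring
  rw [hcast]
  ring

lemma integral_step (n κ : ℕ) (hκ : κ ≤ n) (p A : ℝ) (hp0 : 0 < p) (hA : 0 < A) :
    ∫ t in (0:ℝ)..A, (∑ k ∈ Finset.Icc (κ+1) n,
        dd n κ k * ((p*(A-t)/A)^k * (1 - p*(A-t)/A)^(n-k)))
      = (A/p) * ∑ k ∈ Finset.Icc (κ+1) n, cc n κ k * (p^(k+1) * (1-p)^(n-k)) := by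
  set H : ℝ → ℝ := fun x => ∑ k ∈ Finset.Icc (κ+1) n, cc n κ k * (x^(k+1) * (1-x)^(n-k)) with hH
  have hg : ∀ t : ℝ, HasDerivAt (fun t : ℝ => p*(A-t)/A) (-(p/A)) t := by
    intro t
    have : HasDerivAt (fun t : ℝ => (A - t) * (p/A)) ((-1) * (p/A)) t :=
      ((hasDerivAt_id t).const_sub A).mul_const (p/A)
    convert this using 1
    · funext s; ring
    · ring
  have hF : ∀ t : ℝ, HasDerivAt (fun t => -(A/p) * H (p*(A-t)/A))
      (∑ k ∈ Finset.Icc (κ+1) n,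
        dd n κ k * ((p*(A-t)/A)^k * (1 - p*(A-t)/A)^(n-k))) t := by
    intro t
    have hcomp := (hasDerivAt_H n κ hκ (p*(A-t)/A)).comp t (hg t)
    have := hcomp.const_mul (-(A/p))
    refine this.congr_deriv ?_
    have hpA : A / p * (p / A) = 1 := by
      rw [div_mul_div_comm, mul_comm A p, div_self (mul_ne_zero hp0.ne' hA.ne')]
    rw [mul_neg, neg_mul_neg, mul_left_comm, hpA, mul_one]
  have hcont : Continuous fun t : ℝ => ∑ k ∈ Finset.Icc (κ+1) n,
      dd n κ k * ((p*(A-t)/A)^k * (1 - p*(A-t)/A)^(n-k)) := by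
    apply continuous_finset_sum
    intro k _
    fun_prop
  rw [intervalIntegral.integral_eq_sub_of_hasDerivAt (fun t _ => hF t) (hcont.intervalIntegrable 0 A)]
  have h1 : p*(A-A)/A = 0 := by rw [sub_self, mul_zero, zero_div]
  have h2 : p*(A-0)/A = p := by rw [sub_zero, mul_div_assoc, div_self hA.ne', mul_one]
  rw [h1, h2]
  have hH0 : H 0 = 0 := by
    simp [hH]
  rw [hH0, mul_zero, zero_sub, neg_mul, neg_neg]



lemma sum_Icc_cast (a b : ℕ) (hab : a ≤ b + 1) :
    ∑ i ∈ Finset.Icc a b, (i : ℝ) = ((b:ℝ) * (b+1) - (a:ℝ) * (a-1)) / 2 := by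
  have h1 : Finset.Icc a b = Finset.Ico a (b+1) := by rw [Finset.Ico_add_one_right_eq_Icc]
  have h2 : ∀ m : ℕ, ∑ i ∈ Finset.range m, (i : ℝ) = (m:ℝ) * ((m:ℝ) - 1) / 2 := by
    intro m
    induction m with
    | zero => simp
    | succ l ih => rw [Finset.sum_range_succ, ih]; push_cast; ring
  have h3 := Finset.sum_Ico_consecutive (fun i => (i:ℝ)) (Nat.zero_le a) hab
  rw [h1]
  have h4 : Finset.Ico 0 a = Finset.range a := by rw [Finset.range_eq_Ico]
  have h5 : Finset.Ico 0 (b+1) = Finset.range (b+1) := by rw [Finset.range_eq_Ico]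
  rw [h4, h5, h2, h2] at h3
  have := h3
  push_cast at this ⊢
  linarith

lemma gauss_inner_sum {κ k : ℕ} (h : κ ≤ k) :
    ∑ i ∈ Finset.Icc (κ + 1) k, (1 - (i : ℝ) / ((k : ℝ) + 1)) =
      ((k : ℝ) - κ) * ((k : ℝ) - κ + 1) / (2 * ((k : ℝ) + 1)) := by
  have hcard : (Finset.Icc (κ + 1) k).card = k - κ := by
    rw [Nat.card_Icc]; omega
  have hk1 : ((k:ℝ) + 1) ≠ 0 := by positivity
  rw [Finset.sum_sub_distrib, Finset.sum_const, hcard, ← Finset.sum_div, sum_Icc_cast _ _ (by omega)]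
  have hcast : ((k - κ : ℕ) : ℝ) = (k:ℝ) - κ := by
    push_cast [h]; ring
  rw [nsmul_eq_mul, hcast]
  push_cast
  field_simp
  ring


-- L1: counting lemma
lemma count_lemma {n κ : ℕ} (T : Finset (Fin n)) (a : Fin n → ℝ)
    (hT : T.card = κ) (hdom : ∀ i ∈ T, ∀ j ∉ T, a j ≤ a i) (t : ℝ) :
    (filter (fun j => t < a j) Tᶜ).card = (filter (fun j => t < a j) univ).card - κ := by
  classical
  by_cases h : (filter (fun j => t < a j) Tᶜ).Nonempty
  · obtain ⟨j0, hj0⟩ := h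
    rw [mem_filter, mem_compl] at hj0
    have hTsub : T ⊆ filter (fun j => t < a j) univ := by
      intro i hi
      simp only [mem_filter, mem_univ, true_and]
      exact lt_of_lt_of_le hj0.2 (hdom i hi j0 hj0.1)
    have hsplit : filter (fun j => t < a j) univ = T ∪ filter (fun j => t < a j) Tᶜ := by
      ext x
      simp only [mem_filter, mem_univ, true_and, mem_union, mem_compl]
      constructor
      · intro hx
        by_cases hxT : x ∈ T
        · exact Or.inl hxT
        · exact Or.inr ⟨hxT, hx⟩
      · rintro (hx | ⟨_, hx⟩)
        · simpa using hTsub hx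
        · exact hx
    have hdisj : Disjoint T (filter (fun j => t < a j) Tᶜ) := by
      refine disjoint_left.2 fun x hx hx' => ?_
      rw [mem_filter, mem_compl] at hx'
      exact hx'.1 hx
    rw [hsplit, card_union_of_disjoint hdisj, hT, Nat.add_sub_cancel_left]
  · rw [not_nonempty_iff_eq_empty] at h
    rw [h, card_empty]
    have hsub : filter (fun j => t < a j) univ ⊆ T := by
      intro x hx
      by_contra hxT
      have : x ∈ filter (fun j => t < a j) Tᶜ := by
        rw [mem_filter, mem_compl]
        exact ⟨hxT, (mem_filter.1 hx).2⟩
      simp [h] at this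
    have := card_le_card hsub
    omega


lemma layer_cake {n : ℕ} (κ : ℕ) (b : Fin n → ℝ) (hb : ∀ j, 0 ≤ b j) (T : Finset (Fin n))
    (hT : T.card = κ) (hdom : ∀ i ∈ T, ∀ j ∉ T, b j ≤ b i) :
    ∑ j ∈ Tᶜ, ENNReal.ofReal (b j)
      = ∫⁻ t in Set.Ioi (0:ℝ),
          (((Finset.univ.filter (fun j => t < b j)).card - κ : ℕ) : ENNReal) := by
  have h1 : ∀ j : Fin n, ENNReal.ofReal (b j)
      = ∫⁻ t in Set.Ioi (0:ℝ), (Set.Iio (b j)).indicator 1 t := by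
    intro j
    rw [lintegral_indicator_one measurableSet_Iio, Measure.restrict_apply measurableSet_Iio]
    have : Set.Iio (b j) ∩ Set.Ioi 0 = Set.Ioo 0 (b j) := by
      ext x; simp only [Set.mem_inter_iff, Set.mem_Iio, Set.mem_Ioi, Set.mem_Ioo]; tauto
    rw [this, Real.volume_Ioo, sub_zero]
  calc ∑ j ∈ Tᶜ, ENNReal.ofReal (b j)
      = ∑ j ∈ Tᶜ, ∫⁻ t in Set.Ioi (0:ℝ), (Set.Iio (b j)).indicator 1 t := by
        exact Finset.sum_congr rfl fun j _ => h1 j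
    _ = ∫⁻ t in Set.Ioi (0:ℝ), ∑ j ∈ Tᶜ, (Set.Iio (b j)).indicator 1 t := by
        rw [lintegral_finset_sum]
        intro j _
        exact measurable_one.indicator measurableSet_Iio
    _ = ∫⁻ t in Set.Ioi (0:ℝ),
          (((Finset.univ.filter (fun j => t < b j)).card - κ : ℕ) : ENNReal) := by
        refine lintegral_congr fun t => ?_
        have h2 : ∀ j : Fin n, (Set.Iio (b j)).indicator (1 : ℝ → ENNReal) t
            = if t < b j then 1 else 0 := by
          intro j
          by_cases h : t < b j <;> simp [Set.indicator_apply, Set.mem_Iio, h]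
        rw [Finset.sum_congr rfl fun j _ => h2 j, Finset.sum_boole,
          count_lemma T b hT hdom t, ENNReal.natCast_sub]


lemma abs_set_meas (t : ℝ) : MeasurableSet {x : ℝ | t < |x|} :=
  measurableSet_lt measurable_const continuous_abs.measurable

lemma nu_univ (p A : ℝ) (hp0 : 0 < p) (hp1 : p ≤ 1) (hA : 0 < A) :
    (ENNReal.ofReal (1 - p) • Measure.dirac (0 : ℝ) +
      ENNReal.ofReal (p / (2 * A)) • volume.restrict (Set.Icc (-A) A)) Set.univ = 1 := by
  rw [Measure.add_apply, Measure.smul_apply, Measure.smul_apply, Measure.dirac_apply,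
    Measure.restrict_apply MeasurableSet.univ, Set.univ_inter, Real.volume_Icc]
  simp only [Set.mem_univ, Set.indicator_of_mem, Pi.one_apply, smul_eq_mul, mul_one]
  rw [← ENNReal.ofReal_mul (by positivity)]
  have h1 : p / (2*A) * (A - -A) = p := by
    have : A - -A = 2*A := by ring
    rw [this]
    field_simp
  rw [h1, ← ENNReal.ofReal_add (by linarith) (by linarith)]
  norm_num

lemma nu_tail (p A : ℝ) (hp0 : 0 < p) (hp1 : p ≤ 1) (hA : 0 < A) (t : ℝ) (ht : 0 < t) :
    (ENNReal.ofReal (1 - p) • Measure.dirac (0 : ℝ) +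
      ENNReal.ofReal (p / (2 * A)) • volume.restrict (Set.Icc (-A) A)) {x : ℝ | t < |x|}
      = ENNReal.ofReal (p * (A - t) / A) := by
  have hs := abs_set_meas t
  rw [Measure.add_apply, Measure.smul_apply, Measure.smul_apply,
    Measure.dirac_apply' _ hs, Measure.restrict_apply hs]
  have h0 : (0:ℝ) ∉ {x : ℝ | t < |x|} := by simp; linarith
  rw [Set.indicator_of_notMem h0, smul_zero, zero_add]
  have hset : {x : ℝ | t < |x|} ∩ Set.Icc (-A) A = Set.Ico (-A) (-t) ∪ Set.Ioc t A := by
    ext x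
    simp only [Set.mem_inter_iff, Set.mem_setOf_eq, Set.mem_Icc, Set.mem_union,
      Set.mem_Ico, Set.mem_Ioc]
    rw [lt_abs]
    constructor
    · rintro ⟨h1 | h1, h2, h3⟩
      · right; exact ⟨h1, h3⟩
      · left; constructor; exact h2; linarith
    · rintro (⟨h1, h2⟩ | ⟨h1, h2⟩)
      · exact ⟨Or.inr (by linarith), h1, by linarith⟩
      · exact ⟨Or.inl h1, by linarith, h2⟩
  rw [hset, measure_union _ measurableSet_Ioc]
  · rw [Real.volume_Ico, Real.volume_Ioc]
    have he : -t - -A = A - t := by ring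
    rw [he, smul_eq_mul]
    rcases le_or_gt t A with hta | hta
    · rw [← ENNReal.ofReal_add (by linarith) (by linarith),
        ← ENNReal.ofReal_mul (by positivity)]
      congr 1
      field_simp
      ring
    · have hz : ENNReal.ofReal (A - t) = 0 := ENNReal.ofReal_of_nonpos (by linarith)
      rw [hz, add_zero, mul_zero, Eq.comm, ENNReal.ofReal_eq_zero]
      apply div_nonpos_of_nonpos_of_nonneg _ (le_of_lt hA)
      nlinarith
  · exact Set.disjoint_left.2 (by
      intro x hx hx'
      simp only [Set.mem_Ico] at hx
      simp only [Set.mem_Ioc] at hx'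
      linarith)


lemma config_prob {Ω : Type*} [MeasurableSpace Ω] (μ : Measure Ω) [IsProbabilityMeasure μ]
    {n : ℕ} (X : Ω → Fin n → ℝ) (hmeas : ∀ j : Fin n, Measurable fun ω => X ω j)
    (hindep : iIndepFun (fun j ω => X ω j) μ)
    (ν : Measure ℝ) (hdist : ∀ j : Fin n, Measure.map (fun ω => X ω j) μ = ν)
    (hν1 : ν Set.univ = 1)
    (E : Set ℝ) (hE : MeasurableSet E) (S : Finset (Fin n)) :
    μ {ω | ∀ j : Fin n, (X ω j ∈ E ↔ j ∈ S)} = (ν E)^S.card * (1 - ν E)^(n - S.card) := by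
  classical
  set C : Fin n → Set ℝ := fun j => if j ∈ S then E else Eᶜ with hC
  have hCmeas : ∀ j : Fin n, j ∈ Finset.univ → MeasurableSet (C j) := by
    intro j _
    by_cases h : j ∈ S <;> simp [hC, h, hE, hE.compl]
  have hset : {ω | ∀ j : Fin n, (X ω j ∈ E ↔ j ∈ S)} =
      ⋂ j ∈ Finset.univ, (fun ω => X ω j) ⁻¹' (C j) := by
    ext ω
    simp only [Set.mem_setOf_eq, Set.mem_iInter, Set.mem_preimage, hC]
    constructor
    · intro h j _
      by_cases hj : j ∈ S
      · simp [hj, (h j).2 hj]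
      · simp only [hj, if_false, Set.mem_compl_iff]
        intro hmem
        exact hj ((h j).1 hmem)
    · intro h j
      have := h j (Finset.mem_univ j)
      by_cases hj : j ∈ S
      · simp only [hj, if_true] at this
        exact ⟨fun _ => hj, fun _ => this⟩
      · simp only [hj, if_false] at this
        exact ⟨fun hmem => absurd hmem this, fun hmem => absurd hmem hj⟩
  rw [hset, hindep.measure_inter_preimage_eq_mul Finset.univ hCmeas]
  have hval : ∀ j : Fin n, μ ((fun ω => X ω j) ⁻¹' (C j)) = ν (C j) := by
    intro j
    rw [← hdist j, Measure.map_apply (hmeas j) (hCmeas j (Finset.mem_univ j))]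
  have hνE : ν E ≠ ⊤ := by
    intro h
    have := measure_mono (Set.subset_univ E) (μ := ν)
    rw [h, hν1] at this
    exact absurd this (by simp)
  have hcompl : ν Eᶜ = 1 - ν E := by
    rw [measure_compl hE hνE, hν1]
  calc ∏ j : Fin n, μ ((fun ω => X ω j) ⁻¹' (C j)) = ∏ j : Fin n, ν (C j) := by
        exact Finset.prod_congr rfl fun j _ => hval j
    _ = ∏ j : Fin n, (if j ∈ S then ν E else (1 - ν E)) := by
        refine Finset.prod_congr rfl fun j _ => ?_
        by_cases h : j ∈ S <;> simp [hC, h, hcompl]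
    _ = (ν E)^S.card * (1 - ν E)^(n - S.card) := by
        rw [Finset.prod_ite, Finset.prod_const, Finset.prod_const]
        congr 1
        · congr 1
          simp [Finset.filter_mem_eq_inter]
        · congr 1
          rw [Finset.filter_not, Finset.filter_mem_eq_inter, Finset.univ_inter,
            Finset.card_sdiff_of_subset (Finset.subset_univ S), Finset.card_univ, Fintype.card_fin]

lemma binom_expectation {Ω : Type*} [MeasurableSpace Ω] (μ : Measure Ω) [IsProbabilityMeasure μ]
    {n κ : ℕ} (X : Ω → Fin n → ℝ) (hmeas : ∀ j : Fin n, Measurable fun ω => X ω j)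
    (hindep : iIndepFun (fun j ω => X ω j) μ)
    (ν : Measure ℝ) (hdist : ∀ j : Fin n, Measure.map (fun ω => X ω j) μ = ν)
    (hν1 : ν Set.univ = 1)
    (E : Set ℝ) (hE : MeasurableSet E) :
    ∫⁻ ω, (((Finset.univ.filter (fun j => X ω j ∈ E)).card - κ : ℕ) : ENNReal) ∂μ
      = ∑ k ∈ Finset.Icc (κ+1) n,
          ((k - κ : ℕ) : ENNReal) * (n.choose k) * (ν E)^k * (1 - ν E)^(n-k) := by
  classical
  set AS : Finset (Fin n) → Set Ω := fun S => {ω | ∀ j : Fin n, (X ω j ∈ E ↔ j ∈ S)} with hAS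
  have hASmeas : ∀ S, MeasurableSet (AS S) := by
    intro S
    have : AS S = ⋂ j : Fin n, {ω | X ω j ∈ E ↔ j ∈ S} := by
      ext ω; simp [hAS]
    rw [this]
    refine MeasurableSet.iInter fun j => ?_
    by_cases h : j ∈ S
    · simp only [h, iff_true]
      exact (hmeas j) hE
    · simp only [h, iff_false]
      exact ((hmeas j) hE).compl
  have hpt : ∀ ω, (((Finset.univ.filter (fun j => X ω j ∈ E)).card - κ : ℕ) : ENNReal)
      = ∑ S ∈ (Finset.univ : Finset (Fin n)).powerset,
          Set.indicator (AS S) (fun _ => (((S.card - κ : ℕ)) : ENNReal)) ω := by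
    intro ω
    set S₀ : Finset (Fin n) := Finset.univ.filter (fun j => X ω j ∈ E) with hS₀
    rw [Finset.sum_eq_single S₀]
    · rw [Set.indicator_of_mem]
      simp [hAS, hS₀]
    · intro S _ hne
      rw [Set.indicator_of_notMem]
      simp only [hAS, Set.mem_setOf_eq]
      intro h
      apply hne
      ext j
      rw [Finset.mem_filter]
      simp [h j]
    · intro h
      exact absurd (Finset.mem_powerset.2 (Finset.subset_univ S₀)) h
  calc ∫⁻ ω, (((Finset.univ.filter (fun j => X ω j ∈ E)).card - κ : ℕ) : ENNReal) ∂μ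
      = ∫⁻ ω, ∑ S ∈ (Finset.univ : Finset (Fin n)).powerset,
          Set.indicator (AS S) (fun _ => (((S.card - κ : ℕ)) : ENNReal)) ω ∂μ := by
        exact lintegral_congr hpt
    _ = ∑ S ∈ (Finset.univ : Finset (Fin n)).powerset,
          ∫⁻ ω, Set.indicator (AS S) (fun _ => (((S.card - κ : ℕ)) : ENNReal)) ω ∂μ := by
        refine lintegral_finset_sum _ fun S _ => ?_
        exact (measurable_const.indicator (hASmeas S))
    _ = ∑ S ∈ (Finset.univ : Finset (Fin n)).powerset,
          (((S.card - κ : ℕ)) : ENNReal) * μ (AS S) := by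
        refine Finset.sum_congr rfl fun S _ => ?_
        rw [lintegral_indicator_const (hASmeas S)]
    _ = ∑ S ∈ (Finset.univ : Finset (Fin n)).powerset,
          (((S.card - κ : ℕ)) : ENNReal) * ((ν E)^S.card * (1 - ν E)^(n - S.card)) := by
        refine Finset.sum_congr rfl fun S _ => ?_
        rw [config_prob μ X hmeas hindep ν hdist hν1 E hE S]
    _ = ∑ k ∈ Finset.range (n+1), (n.choose k) •
          ((((k - κ : ℕ)) : ENNReal) * ((ν E)^k * (1 - ν E)^(n - k))) := by
        have := Finset.sum_powerset_apply_card
          (fun m => (((m - κ : ℕ)) : ENNReal) * ((ν E)^m * (1 - ν E)^(n - m)))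
          (x := (Finset.univ : Finset (Fin n)))
        simpa [Finset.card_univ] using this
    _ = ∑ k ∈ Finset.Icc (κ+1) n,
          ((k - κ : ℕ) : ENNReal) * (n.choose k) * (ν E)^k * (1 - ν E)^(n-k) := by
        rw [← Finset.sum_subset (s₁ := Finset.Icc (κ+1) n) (s₂ := Finset.range (n+1))
          (by intro x hx; rw [Finset.mem_range]; rw [Finset.mem_Icc] at hx; omega)]
        · refine Finset.sum_congr rfl fun k _ => ?_
          rw [nsmul_eq_mul]
          ring
        · intro k hkr hk
          rw [Finset.mem_Icc] at hk
          rw [Finset.mem_range] at hkr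
          have : k - κ = 0 := by omega
          simp [this]


/-- **Expected model-mismatch error for the i.i.d. sparse stream model.**
The entries of `X ∈ ℝⁿ` are i.i.d., each `0` with probability `1−p` and otherwise
uniform on `[−A,A]`; `Xκ` keeps the `κ` largest-magnitude entries of `X` (a.s. well
defined) and zeroes the rest.  Then
`E‖X − Xκ‖₁ = A·Σ_{k=κ+1}^n C(n,k) pᵏ(1−p)^{n−k} Σ_{i=κ+1}^k (1 − i/(k+1))`. -/
theorem expected_model_mismatch_error
    {n : ℕ} (hn : 1 ≤ n) (κ : ℕ) (hκ : κ ≤ n)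
    (p : ℝ) (hp0 : 0 < p) (hp1 : p ≤ 1) (A : ℝ) (hA : 0 < A)
    {Ω : Type*} [MeasurableSpace Ω] (μ : Measure Ω) [IsProbabilityMeasure μ]
    (X : Ω → Fin n → ℝ)
    (hmeas : ∀ j : Fin n, Measurable fun ω => X ω j)
    (ν : Measure ℝ)
    (hν : ν = ENNReal.ofReal (1 - p) • Measure.dirac (0 : ℝ) +
      ENNReal.ofReal (p / (2 * A)) • volume.restrict (Set.Icc (-A) A))
    (hdist : ∀ j : Fin n, Measure.map (fun ω => X ω j) μ = ν)
    (hindep : iIndepFun (fun j ω => X ω j) μ)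
    (Xκ : Ω → Fin n → ℝ)
    (hXκ : ∀ᵐ ω ∂μ, ∃ T : Finset (Fin n), T.card = κ ∧
      (∀ j, Xκ ω j = if j ∈ T then X ω j else 0) ∧
      (∀ i ∈ T, ∀ j ∉ T, |X ω j| ≤ |X ω i|)) :
    ∫ ω, ∑ j, |X ω j - Xκ ω j| ∂μ =
      A * ∑ k ∈ Finset.Icc (κ + 1) n,
        (n.choose k : ℝ) * p ^ k * (1 - p) ^ (n - k) *
          ∑ i ∈ Finset.Icc (κ + 1) k, (1 - (i : ℝ) / ((k : ℝ) + 1)) := by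
  -- basic facts about ν
  have hν1 : ν Set.univ = 1 := by rw [hν]; exact nu_univ p A hp0 hp1 hA
  have hq : ∀ t : ℝ, 0 < t → ν {x : ℝ | t < |x|} = ENNReal.ofReal (p*(A-t)/A) := by
    intro t ht; rw [hν]; exact nu_tail p A hp0 hp1 hA t ht
  -- the counting function and its measurability
  set F : Ω → ℝ → ENNReal := fun ω t =>
    (((Finset.univ.filter (fun j => t < |X ω j|)).card - κ : ℕ) : ENNReal) with hF
  have hFmeas : Measurable (Function.uncurry F) := by
    have hcnt : Measurable (fun z : Ω × ℝ =>
        ((Finset.univ.filter (fun j => z.2 < |X z.1 j|)).card : ℕ)) := by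
      have heq : (fun z : Ω × ℝ => ((Finset.univ.filter (fun j => z.2 < |X z.1 j|)).card : ℕ))
          = fun z => ∑ j : Fin n, if z.2 < |X z.1 j| then 1 else 0 := by
        funext z
        rw [Finset.sum_boole]
        simp
      rw [heq]
      refine Finset.measurable_sum _ fun j _ => ?_
      have hset : MeasurableSet {z : Ω × ℝ | z.2 < |X z.1 j|} :=
        measurableSet_lt measurable_snd (((hmeas j).comp measurable_fst).abs)
      exact Measurable.ite hset measurable_const measurable_const
    exact (measurable_from_top (f := fun m : ℕ => ((m - κ : ℕ) : ENNReal))).comp hcnt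
  -- the ω-wise lintegral
  set g : Ω → ENNReal := fun ω => ∫⁻ t in Set.Ioi (0:ℝ), F ω t with hg
  have hgmeas : Measurable g := Measurable.lintegral_prod_right hFmeas
  -- a.e. identification with the layer-cake
  have hae : ∀ᵐ ω ∂μ, ENNReal.ofReal (∑ j, |X ω j - Xκ ω j|) = g ω := by
    filter_upwards [hXκ] with ω hT
    obtain ⟨T, hTcard, hTval, hTdom⟩ := hT
    have s1 : ∀ j, |X ω j - Xκ ω j| = if j ∈ T then 0 else |X ω j| := by
      intro j
      rw [hTval j]
      by_cases h : j ∈ T <;> simp [h]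
    have s2 : ∑ j, |X ω j - Xκ ω j| = ∑ j ∈ Tᶜ, |X ω j| := by
      rw [Finset.sum_congr rfl fun j _ => s1 j, Finset.sum_ite, Finset.sum_const_zero, zero_add]
      congr 1
      ext j
      simp
    rw [s2, ENNReal.ofReal_sum_of_nonneg (fun j _ => abs_nonneg _)]
    exact layer_cake κ (fun j => |X ω j|) (fun j => abs_nonneg _) T hTcard hTdom
  have haefin : ∀ᵐ ω ∂μ, g ω ≠ ⊤ := by
    filter_upwards [hae] with ω hω
    rw [← hω]
    exact ENNReal.ofReal_ne_top
  -- step 1 : Bochner integral to lintegral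
  have eq1 : ∫ ω, ∑ j, |X ω j - Xκ ω j| ∂μ = (∫⁻ ω, g ω ∂μ).toReal := by
    have htr : ∀ᵐ ω ∂μ, (∑ j, |X ω j - Xκ ω j|) = (g ω).toReal := by
      filter_upwards [hae] with ω hω
      rw [← hω, ENNReal.toReal_ofReal (Finset.sum_nonneg fun j _ => abs_nonneg _)]
    rw [integral_congr_ae htr]
    exact integral_toReal hgmeas.aemeasurable
      (haefin.mono fun ω h => lt_of_le_of_ne le_top h)
  -- step 2 : Tonelli
  have eq2 : ∫⁻ ω, g ω ∂μ = ∫⁻ t in Set.Ioi (0:ℝ), ∫⁻ ω, F ω t ∂μ := by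
    exact lintegral_lintegral_swap hFmeas.aemeasurable
  -- step 3 : binomial expectation at fixed t
  have eq3 : ∀ t : ℝ, 0 < t → ∫⁻ ω, F ω t ∂μ =
      ∑ k ∈ Finset.Icc (κ+1) n, ((k - κ : ℕ) : ENNReal) * (n.choose k) *
        (ENNReal.ofReal (p*(A-t)/A))^k * (1 - ENNReal.ofReal (p*(A-t)/A))^(n-k) := by
    intro t ht
    have := binom_expectation μ (κ := κ) X hmeas hindep ν hdist hν1
      {x : ℝ | t < |x|} (abs_set_meas t)
    rw [hq t ht] at this
    simpa only [Set.mem_setOf_eq] using this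
  -- the real integrand
  set Psi : ℝ → ℝ := fun t => ∑ k ∈ Finset.Icc (κ+1) n,
    dd n κ k * ((p*(A-t)/A)^k * (1 - p*(A-t)/A)^(n-k)) with hPsi
  set R : ℝ → ENNReal := fun t => ∑ k ∈ Finset.Icc (κ+1) n,
    ((k - κ : ℕ) : ENNReal) * (n.choose k) *
      (ENNReal.ofReal (p*(A-t)/A))^k * (1 - ENNReal.ofReal (p*(A-t)/A))^(n-k) with hR
  have hcontPsi : Continuous Psi := by
    apply continuous_finset_sum
    intro k _
    fun_prop
  -- step 4 : evaluate the t-integral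
  have eq4 : ∫⁻ t in Set.Ioi (0:ℝ), R t = ENNReal.ofReal (∫ t in (0:ℝ)..A, Psi t) := by
    have hsplit : Set.Ioi (0:ℝ) = Set.Ioo 0 A ∪ Set.Ici A := by
      ext x
      simp only [Set.mem_Ioi, Set.mem_union, Set.mem_Ioo, Set.mem_Ici]
      constructor
      · intro hx
        rcases lt_or_ge x A with h | h
        · exact Or.inl ⟨hx, h⟩
        · exact Or.inr h
      · rintro (⟨h, _⟩ | h)
        · exact h
        · linarith
    have hdisj : Disjoint (Set.Ioo (0:ℝ) A) (Set.Ici A) := by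
      refine Set.disjoint_left.2 fun x hx hx' => ?_
      simp only [Set.mem_Ioo] at hx
      simp only [Set.mem_Ici] at hx'
      linarith
    rw [hsplit, lintegral_union measurableSet_Ici hdisj]
    have hIci : ∫⁻ t in Set.Ici A, R t = 0 := by
      have hz : ∀ t ∈ Set.Ici A, R t = (fun _ => (0:ENNReal)) t := by
        intro t ht
        simp only [hR]
        refine Finset.sum_eq_zero fun k hk => ?_
        rw [Finset.mem_Icc] at hk
        have hq0 : ENNReal.ofReal (p*(A-t)/A) = 0 := by
          rw [ENNReal.ofReal_eq_zero]
          apply div_nonpos_of_nonpos_of_nonneg _ hA.le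
          have : A - t ≤ 0 := by simp only [Set.mem_Ici] at ht; linarith
          nlinarith
        rw [hq0, zero_pow (by omega : k ≠ 0)]
        ring
      rw [setLIntegral_congr_fun measurableSet_Ici hz, lintegral_zero]
    have hIoo : ∫⁻ t in Set.Ioo (0:ℝ) A, R t
        = ∫⁻ t in Set.Ioo (0:ℝ) A, ENNReal.ofReal (Psi t) := by
      refine setLIntegral_congr_fun measurableSet_Ioo (fun t ht => ?_)
      simp only [Set.mem_Ioo] at ht
      have hr0 : 0 ≤ p*(A-t)/A := by
        apply div_nonneg _ hA.le
        nlinarith [ht.2]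
      have hr1 : p*(A-t)/A ≤ 1 := by
        rw [div_le_one hA]
        nlinarith [ht.1, ht.2]
      have h1q : 1 - ENNReal.ofReal (p*(A-t)/A) = ENNReal.ofReal (1 - p*(A-t)/A) := by
        rw [ENNReal.ofReal_sub 1 hr0, ENNReal.ofReal_one]
      have hnn2 : ∀ k ∈ Finset.Icc (κ+1) n,
          (0:ℝ) ≤ dd n κ k * ((p*(A-t)/A)^k * (1 - p*(A-t)/A)^(n-k)) := by
        intro k hk
        rw [Finset.mem_Icc] at hk
        have hdd0 : 0 ≤ dd n κ k := by
          rw [dd]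
          have : (κ:ℝ) ≤ k := by exact_mod_cast (by omega : κ ≤ k)
          have h2 : (0:ℝ) ≤ (k:ℝ) - κ := by linarith
          positivity
        have h3 : (0:ℝ) ≤ 1 - p*(A-t)/A := by linarith
        positivity
      simp only [hR, hPsi, h1q]
      rw [ENNReal.ofReal_sum_of_nonneg hnn2]
      refine Finset.sum_congr rfl fun k hk => ?_
      rw [Finset.mem_Icc] at hk
      have hdd : dd n κ k = ((k - κ : ℕ) : ℝ) * (n.choose k : ℝ) := by
        rw [dd]
        have : ((k - κ : ℕ) : ℝ) = (k:ℝ) - κ := by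
          have : κ ≤ k := by omega
          push_cast [this]; ring
        rw [this]; ring
      rw [hdd, ENNReal.ofReal_mul (by positivity), ENNReal.ofReal_mul (by positivity),
        ENNReal.ofReal_mul (by positivity), ENNReal.ofReal_pow hr0,
        ENNReal.ofReal_pow (by linarith), ENNReal.ofReal_natCast, ENNReal.ofReal_natCast]
      ring
    rw [hIci, add_zero, hIoo]
    have hint : IntegrableOn Psi (Set.Ioo 0 A) volume :=
      (hcontPsi.integrableOn_Icc).mono_set Set.Ioo_subset_Icc_self
    have hnn : 0 ≤ᵐ[volume.restrict (Set.Ioo (0:ℝ) A)] Psi := by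
      refine (ae_restrict_iff' measurableSet_Ioo).2 (ae_of_all _ fun t ht => ?_)
      simp only [Set.mem_Ioo] at ht
      refine Finset.sum_nonneg fun k hk => ?_
      rw [Finset.mem_Icc] at hk
      have hdd0 : 0 ≤ dd n κ k := by
        rw [dd]
        have : (κ:ℝ) ≤ k := by exact_mod_cast (by omega : κ ≤ k)
        have h2 : (0:ℝ) ≤ (k:ℝ) - κ := by linarith
        positivity
      have hr0 : 0 ≤ p*(A-t)/A := by
        apply div_nonneg _ hA.le
        nlinarith [ht.2]
      have hr1 : p*(A-t)/A ≤ 1 := by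
        rw [div_le_one hA]
        nlinarith [ht.1, ht.2]
      have h2 : (0:ℝ) ≤ 1 - p*(A-t)/A := by linarith
      positivity
    rw [← ofReal_integral_eq_lintegral_ofReal hint hnn]
    congr 1
    rw [intervalIntegral.integral_of_le hA.le, ← integral_Ioc_eq_integral_Ioo]
  -- assemble
  rw [eq1, eq2,
    setLIntegral_congr_fun measurableSet_Ioi (fun t (ht : t ∈ Set.Ioi 0) => eq3 t ht)]
  have : (fun t => ∑ k ∈ Finset.Icc (κ+1) n, ((k - κ : ℕ) : ENNReal) * (n.choose k) *
      (ENNReal.ofReal (p*(A-t)/A))^k * (1 - ENNReal.ofReal (p*(A-t)/A))^(n-k)) = R := rfl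
  rw [this, eq4, integral_step n κ hκ p A hp0 hA]
  have hS0 : 0 ≤ ∑ k ∈ Finset.Icc (κ+1) n, cc n κ k * (p^(k+1) * (1-p)^(n-k)) := by
    refine Finset.sum_nonneg fun k hk => ?_
    rw [Finset.mem_Icc] at hk
    have : (κ:ℝ) ≤ k := by exact_mod_cast (by omega : κ ≤ k)
    have h2 : (0:ℝ) ≤ (k:ℝ) - κ := by linarith
    have h3 : (0:ℝ) ≤ 1 - p := by linarith
    rw [cc]
    positivity
  rw [ENNReal.toReal_ofReal (by positivity)]
  -- final algebra
  rw [Finset.mul_sum, Finset.mul_sum]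
  refine Finset.sum_congr rfl fun k hk => ?_
  rw [Finset.mem_Icc] at hk
  rw [gauss_inner_sum (by omega : κ ≤ k), cc]
  have hk1 : ((k:ℝ)+1) ≠ 0 := by positivity
  field_simp
  ring
end
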